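/- Let (G,κ) be a capacitated graph with κ(x) ≤ d_G(x) for all x. All DP-Nash subgraphs of (G,κ) have the same D-set if and only if X ∪ Z is independent in G and for every nonempty W ⊆ Y^{κ>0} one has |L(W)| > |W^κ|. -/

import Mathlib

open Finset
open scoped Classical

noncomputable section

variable {V : Type*} [Fintype V]

set_option linter.unusedSectionVars false
set_option linter.unusedVariables false
set_option linter.unusedTactic false
set_option linter.unreachableTactic false
set_option maxHeartbeats 1000000

/-- Degree of a vertex in a (simple) graph on a finite vertex set. -/
def deg (H : SimpleGraph V) (x : V) : ℕ :=
  (Finset.univ.filter fun y => H.Adj x y).card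

/-- `(D, P; H)` is a DP-Nash subgraph of the capacitated graph `(G, κ)`:
`H` is a spanning subgraph of `G`, bipartite with partite sets `D` and `P`,
no vertex of `P` is isolated in `H`, and every `x ∈ D` has
`H`-degree `min (d_G x) (κ x)`. -/
def IsDPNash (G : SimpleGraph V) (κ : V → ℕ) (D P : Finset V) (H : SimpleGraph V) : Prop :=
  H ≤ G ∧ D ∪ P = Finset.univ ∧ Disjoint D P ∧
    (∀ ⦃u v⦄, H.Adj u v → (u ∈ D ∧ v ∈ P) ∨ (u ∈ P ∧ v ∈ D)) ∧
    (∀ v ∈ P, 0 < deg H v) ∧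
    (∀ x ∈ D, deg H x = min (deg G x) (κ x))

/-- `X = {x : κ(x) = d_G(x)}`. -/
def XX (G : SimpleGraph V) (κ : V → ℕ) : Finset V :=
  Finset.univ.filter fun x => κ x = deg G x

/-- `Y = N(X) \ X`. -/
def YY (G : SimpleGraph V) (κ : V → ℕ) : Finset V :=
  Finset.univ.filter fun y => y ∉ XX G κ ∧ ∃ x ∈ XX G κ, G.Adj x y

/-- `Z = V \ (X ∪ Y)`. -/
def ZZ (G : SimpleGraph V) (κ : V → ℕ) : Finset V :=
  Finset.univ \ (XX G κ ∪ YY G κ)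

/-- `Y^{κ>0} = {y ∈ Y : κ(y) > 0}`. -/
def Ypos (G : SimpleGraph V) (κ : V → ℕ) : Finset V :=
  (YY G κ).filter fun y => 0 < κ y

/-- The neighbours of `x` in `G` lying in `W`. -/
def nbrW (G : SimpleGraph V) (x : V) (W : Finset V) : Finset V :=
  Finset.univ.filter fun y => G.Adj x y ∧ y ∈ W

/-- `L(W) = {x ∈ X ∪ Z : |N_G(x) ∩ W| > d_G(x) - κ(x)}`. -/
def LL (G : SimpleGraph V) (κ : V → ℕ) (W : Finset V) : Finset V :=
  (XX G κ ∪ ZZ G κ).filter fun x => deg G x - κ x < (nbrW G x W).card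

def nbhd (G : SimpleGraph V) (x : V) : Finset V :=
  Finset.univ.filter fun y => G.Adj x y
lemma mem_nbhd {G : SimpleGraph V} {x y : V} : y ∈ nbhd G x ↔ G.Adj x y := by simp [nbhd]
def starG (s : V → Finset V) : SimpleGraph V where
  Adj a b := a ≠ b ∧ (b ∈ s a ∨ a ∈ s b)
  symm := ⟨by intro a b h; exact ⟨h.1.symm, h.2.symm⟩⟩
  loopless := ⟨by intro a h; exact h.1 rfl⟩
def Good (G : SimpleGraph V) (κ : V → ℕ) (D P : Finset V) (s : V → Finset V) : Prop :=
  D ∪ P = Finset.univ ∧ Disjoint D P ∧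
  (∀ v, v ∉ D → s v = ∅) ∧
  (∀ v ∈ D, ∀ b ∈ s v, b ∈ P ∧ G.Adj v b) ∧
  (∀ v ∈ D, (s v).card = κ v) ∧
  (∀ p ∈ P, ∃ d ∈ D, p ∈ s d)
lemma good_center_mem {G : SimpleGraph V} {κ : V → ℕ} {D P : Finset V} {s : V → Finset V}
    (hg : Good G κ D P s) {a b : V} (h : b ∈ s a) : a ∈ D := by
  by_contra hc
  rw [hg.2.2.1 a hc] at h
  exact absurd h (notMem_empty b)

lemma good_isDPNash {G : SimpleGraph V} {κ : V → ℕ} {D P : Finset V} {s : V → Finset V}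
    (hκ : ∀ v, κ v ≤ deg G v) (hg : Good G κ D P s) : IsDPNash G κ D P (starG s) := by
  obtain ⟨hup, hdisj, hnd, htar, hcard, hcov⟩ := hg
  have hDP : ∀ {a b : V}, b ∈ s a → a ∈ D ∧ b ∈ P := by
    intro a b h
    have ha : a ∈ D := good_center_mem ⟨hup, hdisj, hnd, htar, hcard, hcov⟩ h
    exact ⟨ha, (htar a ha b h).1⟩
  have hfil : ∀ x ∈ D, (Finset.univ.filter fun y => (starG s).Adj x y) = s x := by
    intro x hx
    ext b
    simp only [mem_filter, mem_univ, true_and]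
    show (x ≠ b ∧ (b ∈ s x ∨ x ∈ s b)) ↔ b ∈ s x
    constructor
    · rintro ⟨hne, hb | hb⟩
      · exact hb
      · exact absurd hx (disjoint_right.1 hdisj (hDP hb).2)
    · intro hb
      have hbP := (hDP hb).2
      exact ⟨fun he => disjoint_left.1 hdisj hx (he ▸ hbP), Or.inl hb⟩
  refine ⟨?_, hup, hdisj, ?_, ?_, ?_⟩
  · intro a b hab
    rcases hab.2 with h | h
    · exact (htar a (hDP h).1 b h).2
    · exact ((htar b (hDP h).1 a h).2).symm
  · intro u v huv
    rcases huv.2 with h | h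
    · exact Or.inl (hDP h)
    · exact Or.inr ⟨(hDP h).2, (hDP h).1⟩
  · intro v hv
    obtain ⟨d, hd, hvd⟩ := hcov v hv
    have : (starG s).Adj v d := by
      refine ⟨?_, Or.inr hvd⟩
      intro he
      exact disjoint_left.1 hdisj hd (he ▸ hv)
    exact Finset.card_pos.2 ⟨d, by simpa [nbhd] using this⟩
  · intro x hx
    have : deg (starG s) x = (s x).card := by rw [deg, hfil x hx]
    rw [this, hcard x hx, min_eq_right (hκ x)]

lemma good_mono {G G' : SimpleGraph V} {κ : V → ℕ} {D P : Finset V} {s : V → Finset V}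
    (hle : G' ≤ G) (hg : Good G' κ D P s) : Good G κ D P s :=
  ⟨hg.1, hg.2.1, hg.2.2.1, fun v hv b hb => ⟨(hg.2.2.2.1 v hv b hb).1, hle (hg.2.2.2.1 v hv b hb).2⟩,
   hg.2.2.2.2⟩

set_option linter.unusedSectionVars false

lemma deg_le_deg {G G' : SimpleGraph V} (h : G' ≤ G) (v : V) : deg G' v ≤ deg G v := by
  apply Finset.card_le_card
  intro y hy
  simp only [mem_filter, mem_univ, true_and] at hy ⊢
  exact h hy

def delK (G : SimpleGraph V) (K : Finset V) : SimpleGraph V where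
  Adj a b := G.Adj a b ∧ a ∉ K ∧ b ∉ K
  symm := ⟨by intro a b h; exact ⟨h.1.symm, h.2.2, h.2.1⟩⟩
  loopless := ⟨by intro a h; exact G.loopless.irrefl a h.1⟩

lemma delK_adj {G : SimpleGraph V} {K : Finset V} {a b : V} :
    (delK G K).Adj a b ↔ G.Adj a b ∧ a ∉ K ∧ b ∉ K := Iff.rfl

lemma delK_le (G : SimpleGraph V) (K : Finset V) : delK G K ≤ G := fun _ _ h => h.1

lemma nbhd_delK_of_mem {G : SimpleGraph V} {K : Finset V} {v : V} (h : v ∈ K) :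
    nbhd (delK G K) v = ∅ := by
  ext y
  simp only [mem_nbhd, delK_adj, notMem_empty, iff_false]
  rintro ⟨-, hv, -⟩
  exact hv h

lemma deg_delK_of_mem {G : SimpleGraph V} {K : Finset V} {v : V} (h : v ∈ K) :
    deg (delK G K) v = 0 := by
  have h2 : deg (delK G K) v = (nbhd (delK G K) v).card := rfl
  rw [h2, nbhd_delK_of_mem h, card_empty]

lemma nbhd_delK_of_not_mem {G : SimpleGraph V} {K : Finset V} {v : V} (h : v ∉ K) :
    nbhd (delK G K) v = nbhd G v \ K := by
  ext y
  simp only [mem_nbhd, delK_adj, mem_sdiff]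
  constructor
  · rintro ⟨h1, -, h3⟩; exact ⟨h1, h3⟩
  · rintro ⟨h1, h2⟩; exact ⟨h1, h, h2⟩

def delE (G : SimpleGraph V) (u v : V) : SimpleGraph V where
  Adj a b := G.Adj a b ∧ ¬(a = u ∧ b = v) ∧ ¬(a = v ∧ b = u)
  symm := ⟨by intro a b h; exact ⟨h.1.symm, fun hc => h.2.2 ⟨hc.2, hc.1⟩, fun hc => h.2.1 ⟨hc.2, hc.1⟩⟩⟩
  loopless := ⟨by intro a h; exact G.loopless.irrefl a h.1⟩

lemma delE_adj {G : SimpleGraph V} {u v a b : V} :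
    (delE G u v).Adj a b ↔ G.Adj a b ∧ ¬(a = u ∧ b = v) ∧ ¬(a = v ∧ b = u) := Iff.rfl

lemma delE_le (G : SimpleGraph V) (u v : V) : delE G u v ≤ G := fun _ _ h => h.1

lemma nbhd_delE_left {G : SimpleGraph V} {u v : V} : nbhd (delE G u v) u = nbhd G u \ {v} := by
  ext y
  rw [mem_nbhd, mem_sdiff, mem_nbhd, mem_singleton, delE_adj]
  constructor
  · rintro ⟨h1, h2, -⟩; exact ⟨h1, fun he => h2 ⟨rfl, he⟩⟩
  · rintro ⟨h1, h2⟩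
    refine ⟨h1, ?_, ?_⟩
    · rintro ⟨-, he⟩; exact h2 he
    · rintro ⟨-, he2⟩; exact G.loopless.irrefl u (he2 ▸ h1)

lemma nbhd_delE_other {G : SimpleGraph V} {u v a : V} (ha : a ≠ u) (ha' : a ≠ v) :
    nbhd (delE G u v) a = nbhd G a := by
  ext y
  rw [mem_nbhd, mem_nbhd, delE_adj]
  constructor
  · rintro ⟨h1, -, -⟩; exact h1
  · intro h1
    exact ⟨h1, fun hc => ha hc.1, fun hc => ha' hc.1⟩

lemma deg_delE_left {G : SimpleGraph V} {u v : V} (huv : G.Adj u v) :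
    deg (delE G u v) u = deg G u - 1 := by
  have h1 : deg (delE G u v) u = (nbhd G u \ {v}).card := by
    rw [deg, ← nbhd, nbhd_delE_left]
  rw [h1, card_sdiff_of_subset (by simp [mem_nbhd, huv]), card_singleton]
  rfl

lemma deg_delE_right {G : SimpleGraph V} {u v : V} (huv : G.Adj u v) :
    deg (delE G u v) v = deg G v - 1 := by
  have h2 : delE G u v = delE G v u := by
    ext a b
    simp only [delE_adj]
    tauto
  rw [h2, deg_delE_left huv.symm]

lemma deg_delE_other {G : SimpleGraph V} {u v a : V} (ha : a ≠ u) (ha' : a ≠ v) :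
    deg (delE G u v) a = deg G a := by
  have h1 : deg (delE G u v) a = (nbhd (delE G u v) a).card := rfl
  rw [h1, nbhd_delE_other ha ha']
  rfl

lemma assemble {G : SimpleGraph V} {κ : V → ℕ} (hκ : ∀ v, κ v ≤ deg G v) {x : V}
    (hx : κ x = deg G x) {D' P' : Finset V} {s' : V → Finset V}
    (hg : Good (delK G (insert x (nbhd G x)))
      (fun v => min (κ v) (deg (delK G (insert x (nbhd G x))) v)) D' P' s') :
    ∃ D P s, Good G κ D P s ∧ x ∈ D ∧ ∀ b ∈ nbhd G x, b ∈ P := by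
  set K := insert x (nbhd G x) with hK
  set G' := delK G K with hG'
  set κ' : V → ℕ := fun v => min (κ v) (deg G' v) with hκdef
  obtain ⟨hup, hdisj, hnd, htar, hcard, hcov⟩ := hg
  have hxK : x ∈ K := by rw [hK]; exact mem_insert_self _ _
  have hnbK : ∀ {b : V}, b ∈ nbhd G x → b ∈ K := fun hb => by
    rw [hK]; exact mem_insert.2 (Or.inr hb)
  have hKD' : ∀ v ∈ K, v ∈ D' := by
    intro v hv
    by_contra hvD
    have hvP : v ∈ P' := by
      have h2 := mem_univ v
      rw [← hup] at h2
      rcases mem_union.1 h2 with h | h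
      · exact absurd h hvD
      · exact h
    obtain ⟨d, hd, hvd⟩ := hcov v hvP
    have hadj := (htar d hd v hvd).2
    exact (delK_adj.1 hadj).2.2 hv
  have hsK : ∀ v ∈ K, s' v = ∅ := by
    intro v hv
    have h0 : κ' v = 0 := by
      have hd0 : deg G' v = 0 := deg_delK_of_mem hv
      simp [hκdef, hd0]
    have hc := hcard v (hKD' v hv)
    rw [h0] at hc
    exact card_eq_zero.1 hc
  have hxnb : ∀ v, v ∉ K → x ∉ nbhd G v := by
    intro v hvK hc
    exact hvK (hnbK (mem_nbhd.2 (mem_nbhd.1 hc).symm))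
  have hKint : ∀ v, v ∉ K → nbhd G v ∩ K = nbhd G v ∩ nbhd G x := by
    intro v hvK
    ext y
    rw [hK]
    simp only [mem_inter, mem_insert]
    constructor
    · rintro ⟨h1, h2 | h2⟩
      · exact absurd h1 (h2 ▸ hxnb v hvK)
      · exact ⟨h1, h2⟩
    · rintro ⟨h1, h2⟩; exact ⟨h1, Or.inr h2⟩
  have hdeg' : ∀ v, v ∉ K → deg G' v + (nbhd G v ∩ nbhd G x).card = deg G v := by
    intro v hvK
    have h1 : deg G' v = (nbhd G v \ K).card := by
      rw [deg, ← nbhd, nbhd_delK_of_not_mem hvK]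
    rw [h1, ← hKint v hvK]
    exact Finset.card_sdiff_add_card_inter _ _
  have havail : ∀ v, v ∉ K → κ v - κ' v ≤ (nbhd G v ∩ nbhd G x).card := by
    intro v hvK
    have h1 := hdeg' v hvK
    have h2 := hκ v
    have h3 : κ' v = min (κ v) (deg G' v) := rfl
    omega
  set pat : V → Finset V := fun v =>
    if h : κ v - κ' v ≤ (nbhd G v ∩ nbhd G x).card then
      (Finset.exists_subset_card_eq h).choose else ∅ with hpatdef
  have hpat : ∀ v, v ∉ K → pat v ⊆ nbhd G v ∩ nbhd G x ∧ (pat v).card = κ v - κ' v := by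
    intro v hvK
    have h := havail v hvK
    simp only [hpatdef, dif_pos h]
    obtain ⟨h1, h2⟩ := (Finset.exists_subset_card_eq h).choose_spec
    exact ⟨h1, h2⟩
  refine ⟨insert x (D' \ K), P' ∪ nbhd G x,
    fun v => if v = x then nbhd G x else if v ∈ D' \ K then s' v ∪ pat v else ∅,
    ⟨?_, ?_, ?_, ?_, ?_, ?_⟩, mem_insert_self x _, fun b hb => mem_union.2 (Or.inr hb)⟩
  · apply Finset.eq_univ_of_forall
    intro v
    by_cases hvK : v ∈ K
    · rw [hK] at hvK
      rcases mem_insert.1 hvK with h | h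
      · exact mem_union.2 (Or.inl (mem_insert.2 (Or.inl h)))
      · exact mem_union.2 (Or.inr (mem_union.2 (Or.inr h)))
    · have hv : v ∈ D' ∪ P' := by rw [hup]; exact mem_univ v
      rcases mem_union.1 hv with h | h
      · exact mem_union.2 (Or.inl (mem_insert.2 (Or.inr (mem_sdiff.2 ⟨h, hvK⟩))))
      · exact mem_union.2 (Or.inr (mem_union.2 (Or.inl h)))
  · rw [disjoint_left]
    intro v hv hc
    rcases mem_insert.1 hv with rfl | hv'
    · rcases mem_union.1 hc with h | h
      · exact disjoint_left.1 hdisj (hKD' v hxK) h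
      · exact G.loopless.irrefl v (mem_nbhd.1 h)
    · rcases mem_union.1 hc with h | h
      · exact disjoint_left.1 hdisj (mem_sdiff.1 hv').1 h
      · exact (mem_sdiff.1 hv').2 (hnbK h)
  · intro v hv
    have h1 : v ≠ x := fun he => hv (by rw [he]; exact mem_insert_self x _)
    have h2 : v ∉ D' \ K := fun hc => hv (mem_insert.2 (Or.inr hc))
    simp [h1, h2]
  · intro v hv b hb
    have hb' : b ∈ (if v = x then nbhd G x else if v ∈ D' \ K then s' v ∪ pat v else ∅) := hb
    clear hb
    rename' hb' => hb
    rcases mem_insert.1 hv with rfl | hv'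
    · rw [if_pos rfl] at hb
      exact ⟨mem_union.2 (Or.inr hb), mem_nbhd.1 hb⟩
    · have hne : v ≠ x := by
        rintro rfl
        exact (mem_sdiff.1 hv').2 hxK
      rw [if_neg hne, if_pos hv'] at hb
      have hvD := (mem_sdiff.1 hv').1
      have hvK := (mem_sdiff.1 hv').2
      rcases mem_union.1 hb with h | h
      · exact ⟨mem_union.2 (Or.inl (htar v hvD b h).1), delK_le G K (htar v hvD b h).2⟩
      · have hsub := (hpat v hvK).1 h
        exact ⟨mem_union.2 (Or.inr (mem_inter.1 hsub).2), mem_nbhd.1 (mem_inter.1 hsub).1⟩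
  · intro v hv
    show (if v = x then nbhd G x else if v ∈ D' \ K then s' v ∪ pat v else ∅).card = κ v
    rcases mem_insert.1 hv with rfl | hv'
    · rw [if_pos rfl]
      exact hx.symm
    · have hne : v ≠ x := by
        rintro rfl
        exact (mem_sdiff.1 hv').2 hxK
      rw [if_neg hne, if_pos hv']
      have hvD := (mem_sdiff.1 hv').1
      have hvK := (mem_sdiff.1 hv').2
      have hd1 : Disjoint (s' v) (pat v) := by
        rw [disjoint_left]
        intro a ha hc
        have haP : a ∈ P' := (htar v hvD a ha).1
        have haK : a ∈ K := mem_insert.2 (Or.inr (mem_inter.1 ((hpat v hvK).1 hc)).2)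
        exact disjoint_left.1 hdisj (hKD' a haK) haP
      rw [card_union_of_disjoint hd1, hcard v hvD, (hpat v hvK).2]
      have hle : κ' v ≤ κ v := min_le_left _ _
      have h3 : κ' v = min (κ v) (deg G' v) := rfl
      omega
  · intro p hp
    rcases mem_union.1 hp with h | h
    · obtain ⟨d, hd, hpd⟩ := hcov p h
      have hdK : d ∉ K := by
        intro hc
        rw [hsK d hc] at hpd
        exact absurd hpd (notMem_empty p)
      have hdm : d ∈ D' \ K := mem_sdiff.2 ⟨hd, hdK⟩
      refine ⟨d, mem_insert.2 (Or.inr hdm), ?_⟩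
      show p ∈ (if d = x then nbhd G x else if d ∈ D' \ K then s' d ∪ pat d else ∅)
      have hne : d ≠ x := fun he => hdK (he ▸ hxK)
      rw [if_neg hne, if_pos hdm]
      exact mem_union.2 (Or.inl hpd)
    · refine ⟨x, mem_insert_self _ _, ?_⟩
      show p ∈ (if x = x then nbhd G x else if x ∈ D' \ K then s' x ∪ pat x else ∅)
      rw [if_pos rfl]
      exact h

lemma adj_deg_pos' {G : SimpleGraph V} {x y : V} (h : G.Adj x y) : 0 < deg G x :=
  Finset.card_pos.2 ⟨y, by simp [deg, h]⟩

theorem exists_good (G : SimpleGraph V) (κ : V → ℕ) (hκ : ∀ v, κ v ≤ deg G v)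
    (hedge : ∀ u v, G.Adj u v → 0 < κ u ∨ 0 < κ v) : ∃ D P s, Good G κ D P s := by
  suffices h : ∀ (n : ℕ) (G : SimpleGraph V) (κ : V → ℕ), (∑ v, deg G v) = n →
      (∀ v, κ v ≤ deg G v) → (∀ u v, G.Adj u v → 0 < κ u ∨ 0 < κ v) →
      ∃ D P s, Good G κ D P s by
    exact h _ G κ rfl hκ hedge
  intro n
  induction n using Nat.strong_induction_on with
  | _ n IH =>
  intro G κ hn hκ hedge
  by_cases hE : ∃ a b, G.Adj a b
  swap
  · push_neg at hE
    refine ⟨univ, ∅, fun _ => ∅, ?_, ?_, fun v _ => rfl, ?_, ?_, ?_⟩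
    · simp
    · exact disjoint_empty_right _
    · intro v _ b hb
      exact absurd hb (notMem_empty b)
    · intro v _
      have h0 : deg G v = 0 := by
        rw [deg, Finset.card_eq_zero, Finset.filter_eq_empty_iff]
        intro y _
        exact hE v y
      have := hκ v
      simp only [card_empty]
      omega
    · intro p hp
      exact absurd hp (notMem_empty p)
  · obtain ⟨a, b, hab⟩ := hE
    by_cases hA : ∃ u v, G.Adj u v ∧ κ u < deg G u ∧ κ v < deg G v
    · obtain ⟨u, v, huv, hu, hv⟩ := hA
      have hκ' : ∀ w, κ w ≤ deg (delE G u v) w := by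
        intro w
        by_cases h1 : w = u
        · subst h1; rw [deg_delE_left huv]; omega
        · by_cases h2 : w = v
          · subst h2; rw [deg_delE_right huv]; omega
          · rw [deg_delE_other h1 h2]; exact hκ w
      have hedge' : ∀ c d, (delE G u v).Adj c d → 0 < κ c ∨ 0 < κ d :=
        fun c d h => hedge c d h.1
      have hlt : ∑ w, deg (delE G u v) w < n := by
        rw [← hn]
        apply Finset.sum_lt_sum
        · intro i _
          exact deg_le_deg (delE_le G u v) i
        · refine ⟨u, mem_univ u, ?_⟩
          rw [deg_delE_left huv]
          have := adj_deg_pos' huv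
          omega
      obtain ⟨D, P, s, hgood⟩ := IH _ hlt (delE G u v) κ rfl hκ' hedge'
      exact ⟨D, P, s, good_mono (delE_le G u v) hgood⟩
    · push_neg at hA
      obtain ⟨x, hx, hdx⟩ : ∃ x, κ x = deg G x ∧ 0 < deg G x := by
        by_cases h : κ a = deg G a
        · exact ⟨a, h, adj_deg_pos' hab⟩
        · refine ⟨b, ?_, adj_deg_pos' hab.symm⟩
          have h1 := lt_of_le_of_ne (hκ a) h
          have h2 := hA a b hab h1
          exact le_antisymm (hκ b) h2
      set K := insert x (nbhd G x) with hK
      set G' := delK G K with hG'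
      set κ' : V → ℕ := fun w => min (κ w) (deg G' w) with hκ'd
      have hκ'2 : ∀ w, κ' w ≤ deg G' w := fun w => min_le_right _ _
      have hedge' : ∀ c d, G'.Adj c d → 0 < κ' c ∨ 0 < κ' d := by
        intro c d h
        have h1 : 0 < deg G' c := adj_deg_pos' h
        have h2 : 0 < deg G' d := adj_deg_pos' h.symm
        rcases hedge c d (delK_le G K h) with hc | hd
        · exact Or.inl (lt_min hc h1)
        · exact Or.inr (lt_min hd h2)
      have hlt : ∑ w, deg G' w < n := by
        rw [← hn]
        apply Finset.sum_lt_sum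
        · intro i _
          exact deg_le_deg (delK_le G K) i
        · refine ⟨x, mem_univ x, ?_⟩
          rw [deg_delK_of_mem (mem_insert_self _ _)]
          exact hdx
      obtain ⟨D', P', s', hgood'⟩ := IH _ hlt G' κ' rfl hκ'2 hedge'
      obtain ⟨D, P, s, hg, -, -⟩ := assemble hκ hx hgood'
      exact ⟨D, P, s, hg⟩

/-- Star lemma: a tight vertex can be put in D with all its neighbours in P. -/
lemma star_good (G : SimpleGraph V) (κ : V → ℕ) (hκ : ∀ v, κ v ≤ deg G v)
    (hedge : ∀ u v, G.Adj u v → 0 < κ u ∨ 0 < κ v) {x : V} (hx : κ x = deg G x) :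
    ∃ D P s, Good G κ D P s ∧ x ∈ D ∧ ∀ b ∈ nbhd G x, b ∈ P := by
  set K := insert x (nbhd G x) with hK
  set G' := delK G K with hG'
  set κ' : V → ℕ := fun w => min (κ w) (deg G' w) with hκ'd
  have hκ'2 : ∀ w, κ' w ≤ deg G' w := fun w => min_le_right _ _
  have hedge' : ∀ c d, G'.Adj c d → 0 < κ' c ∨ 0 < κ' d := by
    intro c d h
    have h1 : 0 < deg G' c := adj_deg_pos' h
    have h2 : 0 < deg G' d := adj_deg_pos' h.symm
    rcases hedge c d (delK_le G K h) with hc | hd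
    · exact Or.inl (lt_min hc h1)
    · exact Or.inr (lt_min hd h2)
  obtain ⟨D', P', s', hgood'⟩ := exists_good G' κ' hκ'2 hedge'
  exact assemble hκ hx hgood'

variable {G : SimpleGraph V} {κ : V → ℕ}

lemma mem_XX {x : V} : x ∈ XX G κ ↔ κ x = deg G x := by simp [XX]
lemma mem_YY {y : V} : y ∈ YY G κ ↔ y ∉ XX G κ ∧ ∃ x ∈ XX G κ, G.Adj x y := by simp [YY]
lemma mem_ZZ {z : V} : z ∈ ZZ G κ ↔ z ∉ XX G κ ∧ z ∉ YY G κ := by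
  rw [ZZ, mem_sdiff, mem_union]
  simp only [mem_univ, true_and]
  tauto
lemma mem_Ypos {y : V} : y ∈ Ypos G κ ↔ y ∈ YY G κ ∧ 0 < κ y := by simp [Ypos]
lemma nbrW_eq (x : V) (W : Finset V) : nbrW G x W = nbhd G x ∩ W := by
  ext y; simp [nbrW, nbhd, mem_inter]
lemma mem_LL {x : V} {W : Finset V} :
    x ∈ LL G κ W ↔ x ∈ XX G κ ∪ ZZ G κ ∧ deg G x - κ x < (nbhd G x ∩ W).card := by
  rw [LL, mem_filter, nbrW_eq]

lemma tri (v : V) : v ∈ XX G κ ∨ v ∈ YY G κ ∨ v ∈ ZZ G κ := by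
  by_cases h1 : v ∈ XX G κ
  · exact Or.inl h1
  by_cases h2 : v ∈ YY G κ
  · exact Or.inr (Or.inl h2)
  · exact Or.inr (Or.inr (mem_ZZ.2 ⟨h1, h2⟩))

lemma XZ_union_mem {v : V} (h1 : v ∉ YY G κ) : v ∈ XX G κ ∪ ZZ G κ := by
  rcases tri (G := G) (κ := κ) v with h | h | h
  · exact mem_union.2 (Or.inl h)
  · exact absurd h h1
  · exact mem_union.2 (Or.inr h)

lemma nbr_in_Y (hind : ∀ u ∈ XX G κ ∪ ZZ G κ, ∀ v ∈ XX G κ ∪ ZZ G κ, ¬ G.Adj u v)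
    {v u : V} (hv : v ∈ XX G κ ∪ ZZ G κ) (h : G.Adj v u) : u ∈ YY G κ := by
  by_contra hu
  exact hind v hv u (XZ_union_mem hu) h

lemma XZ_Y_disjoint : Disjoint (XX G κ ∪ ZZ G κ) (YY G κ) := by
  rw [disjoint_left]
  intro v hv hY
  rcases mem_union.1 hv with h | h
  · exact (mem_YY.1 hY).1 h
  · exact (mem_ZZ.1 h).2 hY

/-- canonical construction -/
lemma canon (hκ : ∀ v, κ v ≤ deg G v)
    (hind : ∀ u ∈ XX G κ ∪ ZZ G κ, ∀ v ∈ XX G κ ∪ ZZ G κ, ¬ G.Adj u v) :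
    ∃ s, Good G κ (XX G κ ∪ ZZ G κ) (YY G κ) s := by
  set zc : V → Finset V := fun v => (Finset.exists_subset_card_eq
    (show κ v ≤ (nbhd G v).card from hκ v)).choose with hzc
  have hzcs : ∀ v, zc v ⊆ nbhd G v ∧ (zc v).card = κ v := by
    intro v
    exact (Finset.exists_subset_card_eq (show κ v ≤ (nbhd G v).card from hκ v)).choose_spec
  refine ⟨fun v => if v ∈ XX G κ then nbhd G v else if v ∈ ZZ G κ then zc v else ∅,
    ?_, XZ_Y_disjoint, ?_, ?_, ?_, ?_⟩
  · apply Finset.eq_univ_of_forall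
    intro v
    rcases tri (G := G) (κ := κ) v with h | h | h
    · exact mem_union.2 (Or.inl (mem_union.2 (Or.inl h)))
    · exact mem_union.2 (Or.inr h)
    · exact mem_union.2 (Or.inl (mem_union.2 (Or.inr h)))
  · intro v hv
    have h1 : v ∉ XX G κ := fun hc => hv (mem_union.2 (Or.inl hc))
    have h2 : v ∉ ZZ G κ := fun hc => hv (mem_union.2 (Or.inr hc))
    simp [h1, h2]
  · intro v hv b hb
    have hb2 : b ∈ (if v ∈ XX G κ then nbhd G v else if v ∈ ZZ G κ then zc v else ∅) := hb
    clear hb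
    rename' hb2 => hb
    by_cases h1 : v ∈ XX G κ
    · rw [if_pos h1] at hb
      exact ⟨nbr_in_Y hind hv (mem_nbhd.1 hb), mem_nbhd.1 hb⟩
    · have h2 : v ∈ ZZ G κ := by
        rcases mem_union.1 hv with h | h
        · exact absurd h h1
        · exact h
      rw [if_neg h1, if_pos h2] at hb
      have hbn := (hzcs v).1 hb
      exact ⟨nbr_in_Y hind hv (mem_nbhd.1 hbn), mem_nbhd.1 hbn⟩
  · intro v hv
    show (if v ∈ XX G κ then nbhd G v else if v ∈ ZZ G κ then zc v else ∅).card = κ v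
    by_cases h1 : v ∈ XX G κ
    · rw [if_pos h1]
      exact (mem_XX.1 h1).symm
    · have h2 : v ∈ ZZ G κ := by
        rcases mem_union.1 hv with h | h
        · exact absurd h h1
        · exact h
      rw [if_neg h1, if_pos h2]
      exact (hzcs v).2
  · intro p hp
    obtain ⟨-, x, hx, hadj⟩ := mem_YY.1 hp
    refine ⟨x, mem_union.2 (Or.inl hx), ?_⟩
    show p ∈ (if x ∈ XX G κ then nbhd G x else if x ∈ ZZ G κ then zc x else ∅)
    rw [if_pos hx]
    exact mem_nbhd.2 hadj

/-- Backward direction: under independence and O*, every DP-Nash D-set is X ∪ Z. -/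
lemma backward (hκ : ∀ v, κ v ≤ deg G v)
    (hind : ∀ u ∈ XX G κ ∪ ZZ G κ, ∀ v ∈ XX G κ ∪ ZZ G κ, ¬ G.Adj u v)
    (hO : ∀ W : Finset V, W.Nonempty → W ⊆ Ypos G κ → ∑ w ∈ W, κ w < (LL G κ W).card)
    {D P : Finset V} {H : SimpleGraph V} (h : IsDPNash G κ D P H) :
    D = XX G κ ∪ ZZ G κ := by
  obtain ⟨hle, hup, hdisj, hbip, hPdeg, hDdeg⟩ := h
  have hdeg : ∀ d ∈ D, deg H d = κ d := by
    intro d hd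
    rw [hDdeg d hd, min_eq_right (hκ d)]
  have hHnb : ∀ d, (Finset.univ.filter fun y => H.Adj d y) ⊆ nbhd G d := by
    intro d y hy
    simp only [mem_filter, mem_univ, true_and] at hy
    exact mem_nbhd.2 (hle hy)
  have hPD : ∀ v, v ∉ D → v ∈ P := by
    intro v hv
    have h2 := mem_univ v
    rw [← hup] at h2
    rcases mem_union.1 h2 with h | h
    · exact absurd h hv
    · exact h
  have hPdeg' : ∀ v ∈ P, ∃ d ∈ D, H.Adj v d := by
    intro v hv
    obtain ⟨d, hd⟩ := Finset.card_pos.1 (hPdeg v hv)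
    simp only [mem_filter, mem_univ, true_and] at hd
    rcases hbip hd with ⟨h1, h2⟩ | ⟨h1, h2⟩
    · exact absurd hv (disjoint_left.1 hdisj h1)
    · exact ⟨d, h2, hd⟩
  set W := D ∩ Ypos G κ with hW
  have hWD : W ⊆ D := inter_subset_left
  -- any vertex of L(W) lies in P
  have hLP : ∀ x ∈ LL G κ W, x ∈ P := by
    intro x hx
    obtain ⟨hxXZ, hxL⟩ := mem_LL.1 hx
    by_contra hxP
    have hxD : x ∈ D := by
      rcases mem_union.1 (by rw [hup]; exact mem_univ x : x ∈ D ∪ P) with h | h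
      · exact h
      · exact absurd h hxP
    have hdisj2 : Disjoint (nbhd G x ∩ W) (Finset.univ.filter fun y => H.Adj x y) := by
      rw [disjoint_left]
      intro a ha hc
      simp only [mem_filter, mem_univ, true_and] at hc
      have haD : a ∈ D := hWD (mem_inter.1 ha).2
      rcases hbip hc with ⟨h1, h2⟩ | ⟨h1, h2⟩
      · exact disjoint_left.1 hdisj haD h2
      · exact disjoint_left.1 hdisj hxD h1
    have hsub : (nbhd G x ∩ W) ∪ (Finset.univ.filter fun y => H.Adj x y) ⊆ nbhd G x :=
      union_subset inter_subset_left (hHnb x)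
    have hcards := Finset.card_le_card hsub
    rw [card_union_of_disjoint hdisj2] at hcards
    have h5 : (Finset.univ.filter fun y => H.Adj x y).card = κ x := hdeg x hxD
    have h6 := hκ x
    have h7 : deg G x = (nbhd G x).card := rfl
    omega
  -- every vertex of L(W) has an H-edge into W
  have hLedge : ∀ x ∈ LL G κ W, ∃ w ∈ W, H.Adj w x := by
    intro x hx
    obtain ⟨hxXZ, hxL⟩ := mem_LL.1 hx
    obtain ⟨d, hdD, hadj⟩ := hPdeg' x (hLP x hx)
    have hdY : d ∈ YY G κ := nbr_in_Y hind hxXZ (hle hadj)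
    have hκd : 0 < κ d := by
      have h1 : 0 < deg H d := by
        apply Finset.card_pos.2
        exact ⟨x, by simp [hadj.symm]⟩
      rw [hdeg d hdD] at h1
      exact h1
    exact ⟨d, mem_inter.2 ⟨hdD, mem_Ypos.2 ⟨hdY, hκd⟩⟩, hadj.symm⟩
  -- W must be empty
  have hW0 : W = ∅ := by
    by_contra hne
    have hWne : W.Nonempty := nonempty_iff_ne_empty.2 hne
    have hO2 := hO W hWne inter_subset_right
    have hsub : LL G κ W ⊆ W.biUnion (fun w => Finset.univ.filter fun y => H.Adj w y) := by
      intro x hx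
      obtain ⟨w, hw, hadj⟩ := hLedge x hx
      exact mem_biUnion.2 ⟨w, hw, by simp [hadj]⟩
    have h1 := Finset.card_le_card hsub
    have h2 := Finset.card_biUnion_le (s := W)
      (t := fun w => Finset.univ.filter fun y => H.Adj w y)
    have h3 : ∑ w ∈ W, (Finset.univ.filter fun y => H.Adj w y).card = ∑ w ∈ W, κ w := by
      apply Finset.sum_congr rfl
      intro w hw
      exact hdeg w (hWD hw)
    omega
  -- X ∪ Z ⊆ D
  have hXZD : ∀ v ∈ XX G κ ∪ ZZ G κ, v ∈ D := by
    intro v hv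
    by_contra hvD
    obtain ⟨d, hdD, hadj⟩ := hPdeg' v (hPD v hvD)
    have hdY : d ∈ YY G κ := nbr_in_Y hind hv (hle hadj)
    have hκd : 0 < κ d := by
      have h1 : 0 < deg H d := Finset.card_pos.2 ⟨v, by simp [hadj.symm]⟩
      rw [hdeg d hdD] at h1
      exact h1
    have : d ∈ W := mem_inter.2 ⟨hdD, mem_Ypos.2 ⟨hdY, hκd⟩⟩
    rw [hW0] at this
    exact absurd this (notMem_empty d)
  -- Y ∩ D = ∅
  have hYP : ∀ y ∈ YY G κ, y ∈ P := by
    intro y hy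
    obtain ⟨-, x, hx, hadj⟩ := mem_YY.1 hy
    have hxD : x ∈ D := hXZD x (mem_union.2 (Or.inl hx))
    have hfull : (Finset.univ.filter fun z => H.Adj x z) = nbhd G x := by
      apply Finset.eq_of_subset_of_card_le (hHnb x)
      have h1 : deg H x = κ x := hdeg x hxD
      have h2 : κ x = deg G x := mem_XX.1 hx
      rw [deg] at h1
      rw [deg] at h2
      rw [← nbhd] at h1 h2 ⊢
      omega
    have hHadj : H.Adj x y := by
      have : y ∈ nbhd G x := mem_nbhd.2 hadj
      rw [← hfull] at this
      simpa using this
    rcases hbip hHadj with ⟨h1, h2⟩ | ⟨h1, h2⟩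
    · exact h2
    · exact absurd hxD (disjoint_right.1 hdisj h1)
  ext v
  constructor
  · intro hv
    rcases tri (G := G) (κ := κ) v with h | h | h
    · exact mem_union.2 (Or.inl h)
    · exact absurd hv (disjoint_right.1 hdisj (hYP v h))
    · exact mem_union.2 (Or.inr h)
  · exact hXZD v

/-- keep only `S`-edges at `v` -/
def keepAt (G : SimpleGraph V) (v : V) (S : Finset V) : SimpleGraph V where
  Adj a b := G.Adj a b ∧ (a = v → b ∈ S) ∧ (b = v → a ∈ S)
  symm := ⟨by intro a b h; exact ⟨h.1.symm, h.2.2, h.2.1⟩⟩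
  loopless := ⟨by intro a h; exact G.loopless.irrefl a h.1⟩

lemma keepAt_adj {G : SimpleGraph V} {v : V} {S : Finset V} {a b : V} :
    (keepAt G v S).Adj a b ↔ G.Adj a b ∧ (a = v → b ∈ S) ∧ (b = v → a ∈ S) := Iff.rfl

lemma keepAt_le (G : SimpleGraph V) (v : V) (S : Finset V) : keepAt G v S ≤ G :=
  fun _ _ h => h.1

lemma nbhd_keepAt_self {G : SimpleGraph V} {v : V} {S : Finset V} (hS : S ⊆ nbhd G v) :
    nbhd (keepAt G v S) v = S := by
  ext b
  rw [mem_nbhd, keepAt_adj]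
  constructor
  · rintro ⟨h1, h2, -⟩
    exact h2 rfl
  · intro hb
    refine ⟨mem_nbhd.1 (hS hb), fun _ => hb, fun hbv => ?_⟩
    exact absurd (mem_nbhd.1 (hS hb)) (by rw [hbv]; exact G.loopless.irrefl v)

lemma nbhd_keepAt_other {G : SimpleGraph V} {v : V} {S : Finset V} {a : V} (ha : a ≠ v) :
    nbhd (keepAt G v S) a = if a ∈ S then nbhd G a else nbhd G a \ {v} := by
  by_cases haS : a ∈ S
  · rw [if_pos haS]
    ext b
    rw [mem_nbhd, keepAt_adj, mem_nbhd]
    constructor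
    · rintro ⟨h1, -, -⟩; exact h1
    · intro h1
      exact ⟨h1, fun hav => absurd hav ha, fun _ => haS⟩
  · rw [if_neg haS]
    ext b
    rw [mem_nbhd, keepAt_adj, mem_sdiff, mem_nbhd, mem_singleton]
    constructor
    · rintro ⟨h1, -, h3⟩
      exact ⟨h1, fun hbv => haS (h3 hbv)⟩
    · rintro ⟨h1, h2⟩
      exact ⟨h1, fun hav => absurd hav ha, fun hbv => absurd hbv h2⟩

lemma deg_keepAt_self {G : SimpleGraph V} {v : V} {S : Finset V} (hS : S ⊆ nbhd G v) :
    deg (keepAt G v S) v = S.card := by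
  have h : deg (keepAt G v S) v = (nbhd (keepAt G v S) v).card := rfl
  rw [h, nbhd_keepAt_self hS]

lemma deg_keepAt_mem {G : SimpleGraph V} {v : V} {S : Finset V} {a : V} (ha : a ≠ v)
    (haS : a ∈ S) : deg (keepAt G v S) a = deg G a := by
  have h : deg (keepAt G v S) a = (nbhd (keepAt G v S) a).card := rfl
  rw [h, nbhd_keepAt_other ha, if_pos haS]
  rfl

lemma deg_keepAt_other {G : SimpleGraph V} {v : V} {S : Finset V} {a : V} (ha : a ≠ v)
    (haS : a ∉ S) : deg G a - 1 ≤ deg (keepAt G v S) a := by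
  have h : deg (keepAt G v S) a = (nbhd (keepAt G v S) a).card := rfl
  rw [h, nbhd_keepAt_other ha, if_neg haS]
  have h1 : (nbhd G a).card - 1 ≤ (nbhd G a \ {v}).card := by
    have h3 := Finset.card_le_card (show nbhd G a ⊆ (nbhd G a \ {v}) ∪ {v} by
      intro y hy
      by_cases hyv : y = v
      · exact mem_union.2 (Or.inr (by simp [hyv]))
      · exact mem_union.2 (Or.inl (mem_sdiff.2 ⟨hy, by simp [hyv]⟩)))
    have h4 := Finset.card_union_le (nbhd G a \ {v}) ({v} : Finset V)
    simp only [card_singleton] at h4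
    omega
  have h5 : deg G a = (nbhd G a).card := rfl
  omega

/-- upgrade a DP-Nash subgraph of a subgraph -/
lemma dpnash_mono {G G₂ : SimpleGraph V} {κ : V → ℕ} {D P : Finset V} {H : SimpleGraph V}
    (hle : G₂ ≤ G) (hκ₂ : ∀ v, κ v ≤ deg G₂ v) (hκ : ∀ v, κ v ≤ deg G v)
    (h : IsDPNash G₂ κ D P H) : IsDPNash G κ D P H := by
  obtain ⟨h1, h2, h3, h4, h5, h6⟩ := h
  refine ⟨le_trans h1 hle, h2, h3, h4, h5, ?_⟩
  intro x hx
  rw [min_eq_right (hκ x)]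
  rw [h6 x hx, min_eq_right (hκ₂ x)]

/-- two DP-Nash subgraphs with different D-sets from an edge between two tight vertices -/
lemma pairA1 {G : SimpleGraph V} {κ : V → ℕ} (hκ : ∀ v, κ v ≤ deg G v)
    (hedge : ∀ u v, G.Adj u v → 0 < κ u ∨ 0 < κ v) {x y : V}
    (hx : κ x = deg G x) (hy : κ y = deg G y) (hxy : G.Adj x y) :
    ∃ (D₁ P₁ : Finset V) (H₁ : SimpleGraph V) (D₂ P₂ : Finset V) (H₂ : SimpleGraph V),
      IsDPNash G κ D₁ P₁ H₁ ∧ IsDPNash G κ D₂ P₂ H₂ ∧ D₁ ≠ D₂ := by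
  obtain ⟨D₁, P₁, s₁, hg₁, hxD₁, hnb₁⟩ := star_good G κ hκ hedge hx
  obtain ⟨D₂, P₂, s₂, hg₂, hyD₂, hnb₂⟩ := star_good G κ hκ hedge hy
  refine ⟨D₁, P₁, starG s₁, D₂, P₂, starG s₂, good_isDPNash hκ hg₁, good_isDPNash hκ hg₂, ?_⟩
  intro he
  have hyP₁ : y ∈ P₁ := hnb₁ y (mem_nbhd.2 hxy)
  have : y ∉ D₁ := disjoint_right.1 hg₁.2.1 hyP₁
  rw [he] at this
  exact this hyD₂

lemma Znbr_not_XX {v w : V} (hv : v ∈ ZZ G κ) (h : G.Adj v w) : w ∉ XX G κ := by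
  intro hw
  rcases mem_ZZ.1 hv with ⟨h1, h2⟩
  exact h2 (mem_YY.2 ⟨h1, w, hw, h.symm⟩)

lemma not_X_Z_adj {u v : V} (hu : u ∈ XX G κ) (hv : v ∈ ZZ G κ) (h : G.Adj u v) : False := by
  rcases mem_ZZ.1 hv with ⟨h1, h2⟩
  exact h2 (mem_YY.2 ⟨h1, u, hu, h⟩)

lemma deg_keepAt_nonadj {G : SimpleGraph V} {v : V} {S : Finset V} {a : V} (ha : a ≠ v)
    (hna : ¬ G.Adj v a) : deg (keepAt G v S) a = deg G a := by
  by_cases haS : a ∈ S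
  · exact deg_keepAt_mem ha haS
  · have h : deg (keepAt G v S) a = (nbhd (keepAt G v S) a).card := rfl
    rw [h, nbhd_keepAt_other ha, if_neg haS]
    have : nbhd G a \ {v} = nbhd G a := by
      rw [Finset.sdiff_eq_self_iff_disjoint, disjoint_singleton_right, mem_nbhd]
      exact fun hc => hna hc.symm
    rw [this]
    rfl

/-- force a Z-vertex with positive capacity into D, with a chosen neighbour in P -/
lemma forceD_Z (hκ : ∀ v, κ v ≤ deg G v)
    (hedge : ∀ u v, G.Adj u v → 0 < κ u ∨ 0 < κ v) {v : V} (hv : v ∈ ZZ G κ)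
    (hκv : 0 < κ v) {u : V} (hu : G.Adj v u) :
    ∃ D P H, IsDPNash G κ D P H ∧ v ∈ D ∧ u ∈ P := by
  obtain ⟨S, hS1, hS2, hS3⟩ := Finset.exists_subsuperset_card_eq
    (show {u} ⊆ nbhd G v by simp [mem_nbhd, hu])
    (by simp only [card_singleton]; exact hκv) (hκ v)
  set G₂ := keepAt G v S with hG₂
  have hdeg₂v : deg G₂ v = κ v := by rw [hG₂, deg_keepAt_self hS2, hS3]
  have hκ₂ : ∀ w, κ w ≤ deg G₂ w := by
    intro w
    by_cases h1 : w = v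
    · subst h1; omega
    · by_cases h2 : w ∈ S
      · rw [hG₂, deg_keepAt_mem h1 h2]; exact hκ w
      · by_cases h3 : G.Adj v w
        · have h4 : deg G w - 1 ≤ deg G₂ w := deg_keepAt_other h1 h2
          have h5 : w ∉ XX G κ := Znbr_not_XX hv h3
          have h6 : κ w ≠ deg G w := fun hc => h5 (mem_XX.2 hc)
          have h7 := hκ w
          omega
        · rw [hG₂, deg_keepAt_nonadj h1 h3]; exact hκ w
  have hedge₂ : ∀ a b, G₂.Adj a b → 0 < κ a ∨ 0 < κ b :=
    fun a b h => hedge a b (keepAt_le G v S h)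
  obtain ⟨D, P, s, hg, hvD, hnb⟩ := star_good G₂ κ hκ₂ hedge₂ hdeg₂v.symm
  refine ⟨D, P, starG s, dpnash_mono (keepAt_le G v S) hκ₂ hκ (good_isDPNash hκ₂ hg),
    hvD, ?_⟩
  apply hnb
  rw [hG₂, nbhd_keepAt_self hS2]
  exact hS1 (mem_singleton_self u)

/-- park an isolated-able Z-vertex with capacity 0 in D -/
lemma forceD_iso (hκ : ∀ v, κ v ≤ deg G v)
    (hedge : ∀ u v, G.Adj u v → 0 < κ u ∨ 0 < κ v) {u : V} (hu : u ∈ ZZ G κ)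
    (hκu : κ u = 0) :
    ∃ D P H, IsDPNash G κ D P H ∧ u ∈ D := by
  set G₃ := keepAt G u ∅ with hG₃
  have hκ₃ : ∀ w, κ w ≤ deg G₃ w := by
    intro w
    by_cases h1 : w = u
    · subst h1
      rw [hκu]
      exact Nat.zero_le _
    · by_cases h3 : G.Adj u w
      · have h4 : deg G w - 1 ≤ deg G₃ w := deg_keepAt_other h1 (notMem_empty w)
        have h5 : w ∉ XX G κ := Znbr_not_XX hu h3
        have h6 : κ w ≠ deg G w := fun hc => h5 (mem_XX.2 hc)
        have h7 := hκ w
        omega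
      · rw [hG₃, deg_keepAt_nonadj h1 h3]; exact hκ w
  have hedge₃ : ∀ a b, G₃.Adj a b → 0 < κ a ∨ 0 < κ b :=
    fun a b h => hedge a b (keepAt_le G u ∅ h)
  obtain ⟨D, P, s, hg⟩ := exists_good G₃ κ hκ₃ hedge₃
  have huD : u ∈ D := by
    by_contra huD
    have huP : u ∈ P := by
      have h2 := mem_univ u
      rw [← hg.1] at h2
      rcases mem_union.1 h2 with h | h
      · exact absurd h huD
      · exact h
    obtain ⟨d, hd, hud⟩ := hg.2.2.2.2.2 u huP
    have hadj := (hg.2.2.2.1 d hd u hud).2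
    exact absurd (keepAt_adj.1 hadj).2.2 (by simp)
  exact ⟨D, P, starG s, dpnash_mono (keepAt_le G u ∅) hκ₃ hκ (good_isDPNash hκ₃ hg), huD⟩

/-- Case A2: an edge inside Z gives two DP-Nash subgraphs with different D-sets -/
lemma pairA2 (hκ : ∀ v, κ v ≤ deg G v)
    (hedge : ∀ u v, G.Adj u v → 0 < κ u ∨ 0 < κ v) {u v : V}
    (hu : u ∈ ZZ G κ) (hv : v ∈ ZZ G κ) (huv : G.Adj u v) :
    ∃ (D₁ P₁ : Finset V) (H₁ : SimpleGraph V) (D₂ P₂ : Finset V) (H₂ : SimpleGraph V),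
      IsDPNash G κ D₁ P₁ H₁ ∧ IsDPNash G κ D₂ P₂ H₂ ∧ D₁ ≠ D₂ := by
  -- helper: swap so that the first vertex has positive capacity
  have main : ∀ a b : V, a ∈ ZZ G κ → b ∈ ZZ G κ → G.Adj a b → 0 < κ b →
      ∃ (D₁ P₁ : Finset V) (H₁ : SimpleGraph V) (D₂ P₂ : Finset V) (H₂ : SimpleGraph V),
      IsDPNash G κ D₁ P₁ H₁ ∧ IsDPNash G κ D₂ P₂ H₂ ∧ D₁ ≠ D₂ := by
    intro a b ha hb hab hκb
    obtain ⟨D₁, P₁, H₁, h₁, hbD₁, haP₁⟩ := forceD_Z hκ hedge hb hκb hab.symm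
    by_cases hκa : 0 < κ a
    · obtain ⟨D₂, P₂, H₂, h₂, haD₂, -⟩ := forceD_Z hκ hedge ha hκa hab
      refine ⟨D₁, P₁, H₁, D₂, P₂, H₂, h₁, h₂, ?_⟩
      intro he
      have : a ∉ D₁ := disjoint_right.1 h₁.2.2.1 haP₁
      rw [he] at this
      exact this haD₂
    · obtain ⟨D₂, P₂, H₂, h₂, haD₂⟩ := forceD_iso hκ hedge ha (by omega)
      refine ⟨D₁, P₁, H₁, D₂, P₂, H₂, h₁, h₂, ?_⟩
      intro he
      have : a ∉ D₁ := disjoint_right.1 h₁.2.2.1 haP₁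
      rw [he] at this
      exact this haD₂
  rcases hedge u v huv with h | h
  · exact main v u hv hu huv.symm h
  · exact main u v hu hv huv h

/-- Case B1: a Y-vertex with few X-neighbours gives two distinct D-sets -/
lemma pairB1 (hκ : ∀ v, κ v ≤ deg G v)
    (hedge : ∀ u v, G.Adj u v → 0 < κ u ∨ 0 < κ v) {w : V}
    (hw : w ∈ Ypos G κ) (hcnt : (nbhd G w ∩ XX G κ).card ≤ κ w) :
    ∃ (D₁ P₁ : Finset V) (H₁ : SimpleGraph V) (D₂ P₂ : Finset V) (H₂ : SimpleGraph V),
      IsDPNash G κ D₁ P₁ H₁ ∧ IsDPNash G κ D₂ P₂ H₂ ∧ D₁ ≠ D₂ := by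
  obtain ⟨hwY, hκw⟩ := mem_Ypos.1 hw
  obtain ⟨-, x, hx, hadjxw⟩ := mem_YY.1 hwY
  have hxnb : x ∈ nbhd G w ∩ XX G κ := mem_inter.2 ⟨mem_nbhd.2 hadjxw.symm, hx⟩
  obtain ⟨S, hS1, hS2, hS3⟩ := Finset.exists_subsuperset_card_eq
    (show nbhd G w ∩ XX G κ ⊆ nbhd G w from inter_subset_left) hcnt (hκ w)
  set G₂ := keepAt G w S with hG₂
  have hxw : x ≠ w := G.ne_of_adj hadjxw
  have hdeg₂w : deg G₂ w = κ w := by rw [hG₂, deg_keepAt_self hS2, hS3]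
  have hκ₂ : ∀ a, κ a ≤ deg G₂ a := by
    intro a
    by_cases h1 : a = w
    · subst h1; omega
    · by_cases h2 : a ∈ S
      · rw [hG₂, deg_keepAt_mem h1 h2]; exact hκ a
      · by_cases h3 : G.Adj w a
        · have h4 : deg G a - 1 ≤ deg G₂ a := deg_keepAt_other h1 h2
          have h5 : a ∉ XX G κ := by
            intro hc
            exact h2 (hS1 (mem_inter.2 ⟨mem_nbhd.2 h3, hc⟩))
          have h6 : κ a ≠ deg G a := fun hc => h5 (mem_XX.2 hc)
          have h7 := hκ a
          omega
        · rw [hG₂, deg_keepAt_nonadj h1 h3]; exact hκ a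
  have hedge₂ : ∀ a b, G₂.Adj a b → 0 < κ a ∨ 0 < κ b :=
    fun a b h => hedge a b (keepAt_le G w S h)
  have hdeg₂x : deg G₂ x = deg G x := by
    rw [hG₂]
    exact deg_keepAt_mem hxw (hS1 hxnb)
  have hadj₂ : G₂.Adj w x := by
    rw [hG₂, keepAt_adj]
    exact ⟨hadjxw.symm, fun _ => hS1 hxnb, fun hc => (hxw hc).elim⟩
  obtain ⟨D₁, P₁, H₁, D₂, P₂, H₂, h₁, h₂, hne⟩ :=
    pairA1 hκ₂ hedge₂ (hdeg₂w.symm) (by rw [hdeg₂x]; exact mem_XX.1 hx) hadj₂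
  exact ⟨D₁, P₁, H₁, D₂, P₂, H₂, dpnash_mono (keepAt_le G w S) hκ₂ hκ h₁,
    dpnash_mono (keepAt_le G w S) hκ₂ hκ h₂, hne⟩

lemma LL_mono {A B : Finset V} (h : A ⊆ B) : LL G κ A ⊆ LL G κ B := by
  intro x hx
  rw [mem_LL] at hx ⊢
  exact ⟨hx.1, lt_of_lt_of_le hx.2 (Finset.card_le_card
    (inter_subset_inter (Finset.Subset.refl _) h))⟩

lemma LL_subset {A : Finset V} : LL G κ A ⊆ XX G κ ∪ ZZ G κ := filter_subset _ _

/-- Case B2 (the hard case): independence holds, every Y⁺ vertex is X-rich,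
but O* fails: two DP-Nash subgraphs with different D-sets exist. -/
lemma pairB2 (hκ : ∀ v, κ v ≤ deg G v)
    (hedge : ∀ u v, G.Adj u v → 0 < κ u ∨ 0 < κ v)
    (hind : ∀ u ∈ XX G κ ∪ ZZ G κ, ∀ v ∈ XX G κ ∪ ZZ G κ, ¬ G.Adj u v)
    (hrich : ∀ w ∈ Ypos G κ, κ w < (nbhd G w ∩ XX G κ).card)
    {W₀ : Finset V} (hW₀ne : W₀.Nonempty) (hW₀sub : W₀ ⊆ Ypos G κ)
    (hW₀ : (LL G κ W₀).card ≤ ∑ w ∈ W₀, κ w) :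
    ∃ (D₁ P₁ : Finset V) (H₁ : SimpleGraph V) (D₂ P₂ : Finset V) (H₂ : SimpleGraph V),
      IsDPNash G κ D₁ P₁ H₁ ∧ IsDPNash G κ D₂ P₂ H₂ ∧ D₁ ≠ D₂ := by
  classical
  set N : ℤ := (Fintype.card V : ℤ) with hN
  set CC : Finset (Finset V) := (Ypos G κ).powerset.filter (fun A => A.Nonempty) with hCC
  have hCCne : CC.Nonempty := ⟨W₀, mem_filter.2 ⟨mem_powerset.2 hW₀sub, hW₀ne⟩⟩
  obtain ⟨W, hWCC, hWmax⟩ := Finset.exists_max_image CC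
    (fun A => (N + 1) * ((∑ w ∈ A, (κ w : ℤ)) - ((LL G κ A).card : ℤ)) + (A.card : ℤ)) hCCne
  have hWsub : W ⊆ Ypos G κ := mem_powerset.1 (mem_filter.1 hWCC).1
  have hWne : W.Nonempty := (mem_filter.1 hWCC).2
  set L := LL G κ W with hL
  have hcard_le_N : ∀ A : Finset V, (A.card : ℤ) ≤ N := by
    intro A
    rw [hN]
    exact_mod_cast Finset.card_le_univ A
  have key : ∀ A ∈ CC, ((∑ w ∈ A, (κ w : ℤ)) - ((LL G κ A).card : ℤ)) ≤
      (∑ w ∈ W, (κ w : ℤ)) - (L.card : ℤ) := by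
    intro A hA
    by_contra hcon
    push_neg at hcon
    have h1 : (∑ w ∈ W, (κ w : ℤ)) - (L.card : ℤ) + 1 ≤
        (∑ w ∈ A, (κ w : ℤ)) - ((LL G κ A).card : ℤ) := hcon
    have h2 : (N + 1) * ((∑ w ∈ A, (κ w : ℤ)) - ((LL G κ A).card : ℤ)) + (A.card : ℤ) ≤
        (N + 1) * ((∑ w ∈ W, (κ w : ℤ)) - (L.card : ℤ)) + (W.card : ℤ) := hWmax A hA
    have h3 : (0 : ℤ) ≤ N + 1 := by
      have : (0 : ℤ) ≤ N := by rw [hN]; exact_mod_cast Nat.zero_le _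
      omega
    have h4 := mul_le_mul_of_nonneg_left h1 h3
    have h5 : (0 : ℤ) ≤ (A.card : ℤ) := by exact_mod_cast Nat.zero_le _
    have h6 := hcard_le_N W
    nlinarith
  have hfW : (L.card : ℤ) ≤ ∑ w ∈ W, (κ w : ℤ) := by
    have h1 := key W₀ (mem_filter.2 ⟨mem_powerset.2 hW₀sub, hW₀ne⟩)
    have h2 : ((LL G κ W₀).card : ℤ) ≤ ∑ w ∈ W₀, (κ w : ℤ) := by
      have := hW₀
      push_cast
      exact_mod_cast this
    linarith
  -- Hall condition for covering L by W
  have hall : ∀ W' ⊆ W, ((L.filter (fun x => nbhd G x ∩ W ⊆ W')).card : ℤ) ≤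
      ∑ w ∈ W', (κ w : ℤ) := by
    intro W' hW'
    by_cases hWW' : W \ W' = ∅
    · have hsub : W ⊆ W' := Finset.sdiff_eq_empty_iff_subset.1 hWW'
      have heq : W' = W := Finset.Subset.antisymm hW' hsub
      rw [heq]
      have h2 : ((L.filter (fun x => nbhd G x ∩ W ⊆ W)).card : ℤ) ≤ (L.card : ℤ) := by
        exact_mod_cast Finset.card_le_card (filter_subset _ _)
      linarith
    · have hW''CC : W \ W' ∈ CC := mem_filter.2 ⟨mem_powerset.2
        (Finset.Subset.trans Finset.sdiff_subset hWsub), nonempty_iff_ne_empty.2 hWW'⟩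
      have hkey := key _ hW''CC
      have hLsub : LL G κ (W \ W') ⊆ L \ (L.filter (fun x => nbhd G x ∩ W ⊆ W')) := by
        intro x hx
        have hxL : x ∈ L := by
          rw [hL]
          exact LL_mono Finset.sdiff_subset hx
        refine mem_sdiff.2 ⟨hxL, ?_⟩
        intro hxS
        have hpos : 0 < (nbhd G x ∩ (W \ W')).card :=
          lt_of_le_of_lt (Nat.zero_le _) (mem_LL.1 hx).2
        obtain ⟨y, hy⟩ := Finset.card_pos.1 hpos
        have hy1 := (mem_inter.1 hy).1
        have hy2 := (mem_inter.1 hy).2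
        have hy3 : y ∈ W' := (mem_filter.1 hxS).2
          (mem_inter.2 ⟨hy1, (mem_sdiff.1 hy2).1⟩)
        exact (mem_sdiff.1 hy2).2 hy3
      have hcard1 : (LL G κ (W \ W')).card ≤
          L.card - (L.filter (fun x => nbhd G x ∩ W ⊆ W')).card := by
        have h1 := Finset.card_le_card hLsub
        rw [Finset.card_sdiff_of_subset (filter_subset _ _)] at h1
        exact h1
      have hcard2 : (L.filter (fun x => nbhd G x ∩ W ⊆ W')).card ≤ L.card :=
        Finset.card_le_card (filter_subset _ _)
      have hsum : ∑ w ∈ W \ W', (κ w : ℤ) + ∑ w ∈ W', (κ w : ℤ) = ∑ w ∈ W, (κ w : ℤ) :=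
        Finset.sum_sdiff hW'
      have hcard1' : ((LL G κ (W \ W')).card : ℤ) ≤
          (L.card : ℤ) - ((L.filter (fun x => nbhd G x ∩ W ⊆ W')).card : ℤ) := by
        push_cast
        omega
      linarith
  have hallN : ∀ W' ⊆ W, (L.filter (fun x => nbhd G x ∩ W ⊆ W')).card ≤ ∑ w ∈ W', κ w := by
    intro W' hW'
    have := hall W' hW'
    exact_mod_cast this
  -- the exchange property from maximality + maximal cardinality
  have hP2 : ∀ t ∈ Ypos G κ, t ∉ W → ∃ x, (x ∈ XX G κ ∪ ZZ G κ) ∧ x ∉ L ∧ G.Adj t x ∧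
      (nbhd G x ∩ W).card = deg G x - κ x := by
    intro t ht htW
    have hWt : insert t W ∈ CC := mem_filter.2 ⟨mem_powerset.2
      (insert_subset ht hWsub), insert_nonempty _ _⟩
    have h2 : (N + 1) * ((∑ w ∈ insert t W, (κ w : ℤ)) - ((LL G κ (insert t W)).card : ℤ)) +
        ((insert t W).card : ℤ) ≤
        (N + 1) * ((∑ w ∈ W, (κ w : ℤ)) - (L.card : ℤ)) + (W.card : ℤ) := hWmax _ hWt
    have hcard_ins : ((insert t W).card : ℤ) = (W.card : ℤ) + 1 := by
      rw [Finset.card_insert_of_notMem htW]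
      push_cast
      ring
    have hsum_ins : ∑ w ∈ insert t W, (κ w : ℤ) = (κ t : ℤ) + ∑ w ∈ W, (κ w : ℤ) :=
      Finset.sum_insert htW
    have hN0 : (0 : ℤ) ≤ N := by rw [hN]; exact_mod_cast Nat.zero_le _
    have hflt : (∑ w ∈ insert t W, (κ w : ℤ)) - ((LL G κ (insert t W)).card : ℤ) ≤
        (∑ w ∈ W, (κ w : ℤ)) - (L.card : ℤ) - 1 := by
      by_contra hcon
      push_neg at hcon
      have h3 : (∑ w ∈ W, (κ w : ℤ)) - (L.card : ℤ) ≤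
          (∑ w ∈ insert t W, (κ w : ℤ)) - ((LL G κ (insert t W)).card : ℤ) := by omega
      have h4 := mul_le_mul_of_nonneg_left h3 (show (0:ℤ) ≤ N + 1 by omega)
      omega
    have hlt : (L.card : ℤ) < ((LL G κ (insert t W)).card : ℤ) := by
      have hκt : (0 : ℤ) ≤ (κ t : ℤ) := by exact_mod_cast Nat.zero_le _
      omega
    have hmono : L ⊆ LL G κ (insert t W) := by
      rw [hL]
      exact LL_mono (subset_insert _ _)
    have hltN : L.card < (LL G κ (insert t W)).card := by exact_mod_cast hlt
    have hdiff : ((LL G κ (insert t W)) \ L).Nonempty := by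
      rw [← Finset.card_pos, Finset.card_sdiff_of_subset hmono]
      omega
    obtain ⟨x, hx⟩ := hdiff
    have hx1 : x ∈ LL G κ (insert t W) := (mem_sdiff.1 hx).1
    have hx2 : x ∉ L := (mem_sdiff.1 hx).2
    obtain ⟨hx3, hx4⟩ := mem_LL.1 hx1
    have hx5 : ¬ (deg G x - κ x < (nbhd G x ∩ W).card) := by
      intro hcon
      exact hx2 (by rw [hL]; exact mem_LL.2 ⟨hx3, hcon⟩)
    have hsub2 : nbhd G x ∩ insert t W ⊆ insert t (nbhd G x ∩ W) := by
      intro y hy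
      rcases mem_insert.1 (mem_inter.1 hy).2 with h | h
      · exact mem_insert.2 (Or.inl h)
      · exact mem_insert.2 (Or.inr (mem_inter.2 ⟨(mem_inter.1 hy).1, h⟩))
    have hcard2 : (nbhd G x ∩ insert t W).card ≤ (nbhd G x ∩ W).card + 1 :=
      le_trans (Finset.card_le_card hsub2) (Finset.card_insert_le _ _)
    have heqt : (nbhd G x ∩ W).card = deg G x - κ x := by omega
    have htmem : t ∈ nbhd G x := by
      by_contra htn
      have hEq : nbhd G x ∩ insert t W = nbhd G x ∩ W := by
        ext y
        simp only [mem_inter, mem_insert]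
        constructor
        · rintro ⟨h1, h2 | h2⟩
          · exact absurd (h2 ▸ h1) htn
          · exact ⟨h1, h2⟩
        · rintro ⟨h1, h2⟩
          exact ⟨h1, Or.inr h2⟩
      rw [hEq] at hx4
      omega
    exact ⟨x, hx3, hx2, (mem_nbhd.1 htmem).symm, heqt⟩
  -- Hall's theorem: an assignment of L to W-neighbours with multiplicities ≤ κ
  have hallT : ∀ s : Finset {x // x ∈ L},
      s.card ≤ (s.biUnion (fun x => (nbhd G x.1 ∩ W).biUnion
        (fun w => ({w} : Finset V) ×ˢ Finset.range (κ w)))).card := by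
    intro s
    set W' := W.filter (fun w => ∃ x ∈ s, w ∈ nbhd G x.1 ∩ W) with hW'
    have hW'sub : W' ⊆ W := filter_subset _ _
    have h1 : (s.image Subtype.val) ⊆ L.filter (fun x => nbhd G x ∩ W ⊆ W') := by
      intro x hx
      obtain ⟨x', hx', rfl⟩ := Finset.mem_image.1 hx
      refine mem_filter.2 ⟨x'.2, ?_⟩
      intro w hw
      exact mem_filter.2 ⟨(mem_inter.1 hw).2, x', hx', hw⟩
    have h2 : s.card = (s.image Subtype.val).card :=
      (Finset.card_image_of_injective s Subtype.val_injective).symm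
    have h3 : W'.biUnion (fun w => ({w} : Finset V) ×ˢ Finset.range (κ w)) ⊆
        s.biUnion (fun x => (nbhd G x.1 ∩ W).biUnion
          (fun w => ({w} : Finset V) ×ˢ Finset.range (κ w))) := by
      intro p hp
      obtain ⟨w, hw, hpw⟩ := Finset.mem_biUnion.1 hp
      obtain ⟨x, hx, hwx⟩ := (mem_filter.1 hw).2
      exact Finset.mem_biUnion.2 ⟨x, hx, Finset.mem_biUnion.2 ⟨w, hwx, hpw⟩⟩
    have h4 : (W'.biUnion (fun w => ({w} : Finset V) ×ˢ Finset.range (κ w))).card =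
        ∑ w ∈ W', κ w := by
      rw [Finset.card_biUnion]
      · apply Finset.sum_congr rfl
        intro w _
        rw [Finset.card_product, Finset.card_singleton, Finset.card_range, one_mul]
      · intro a ha b hb hab
        rw [Function.onFun, Finset.disjoint_left]
        intro p hp hp2
        have e1 : p.1 = a := by
          have := (Finset.mem_product.1 hp).1
          simpa using this
        have e2 : p.1 = b := by
          have := (Finset.mem_product.1 hp2).1
          simpa using this
        exact hab (e1 ▸ e2 ▸ rfl)
    calc s.card = (s.image Subtype.val).card := h2
      _ ≤ (L.filter (fun x => nbhd G x ∩ W ⊆ W')).card := Finset.card_le_card h1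
      _ ≤ ∑ w ∈ W', κ w := hallN W' hW'sub
      _ = (W'.biUnion (fun w => ({w} : Finset V) ×ˢ Finset.range (κ w))).card := h4.symm
      _ ≤ _ := Finset.card_le_card h3
  obtain ⟨finj, hfinj, hfmem⟩ := (Finset.all_card_le_biUnion_card_iff_exists_injective
    (fun x : {x // x ∈ L} => (nbhd G x.1 ∩ W).biUnion
      (fun w => ({w} : Finset V) ×ˢ Finset.range (κ w)))).1 hallT
  set ψ : V → V := fun x => if h : x ∈ L then (finj ⟨x, h⟩).1 else x with hψ
  set σ : V → ℕ := fun x => if h : x ∈ L then (finj ⟨x, h⟩).2 else 0 with hσ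
  have hψspec : ∀ x, x ∈ L → ψ x ∈ nbhd G x ∩ W ∧ σ x < κ (ψ x) := by
    intro x h
    obtain ⟨w, hw, hmem⟩ := Finset.mem_biUnion.1 (hfmem ⟨x, h⟩)
    obtain ⟨hm1, hm2⟩ := Finset.mem_product.1 hmem
    have e1 : (finj ⟨x, h⟩).1 = w := by simpa using hm1
    have e2 : (finj ⟨x, h⟩).2 < κ w := by simpa using hm2
    have eψ : ψ x = w := by rw [hψ]; simp only [dif_pos h]; exact e1
    have eσ : σ x = (finj ⟨x, h⟩).2 := by rw [hσ]; simp only [dif_pos h]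
    rw [eψ, eσ]
    exact ⟨hw, e2⟩
  set aw : V → Finset V := fun w => L.filter (fun x => ψ x = w) with haw
  have haw_sub : ∀ w, aw w ⊆ L := fun w => filter_subset _ _
  have haw_mem : ∀ x ∈ L, x ∈ aw (ψ x) := fun x hx => mem_filter.2 ⟨hx, rfl⟩
  have haw_card : ∀ w, (aw w).card ≤ κ w := by
    intro w
    have hr : (aw w).card ≤ (Finset.range (κ w)).card := by
      apply Finset.card_le_card_of_injOn σ
      · intro x hx
        have hx1 : x ∈ L := (mem_filter.1 hx).1
        have hx2 : ψ x = w := (mem_filter.1 hx).2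
        have := (hψspec x hx1).2
        rw [hx2] at this
        exact Finset.mem_range.2 this
      · intro x hx y hy hxy
        have hx1 : x ∈ L := (mem_filter.1 hx).1
        have hy1 : y ∈ L := (mem_filter.1 hy).1
        have hx2 : ψ x = w := (mem_filter.1 hx).2
        have hy2 : ψ y = w := (mem_filter.1 hy).2
        have e1 : finj ⟨x, hx1⟩ = finj ⟨y, hy1⟩ := by
          apply Prod.ext
          · have ex : (finj ⟨x, hx1⟩).1 = ψ x := by rw [hψ]; simp only [dif_pos hx1]
            have ey : (finj ⟨y, hy1⟩).1 = ψ y := by rw [hψ]; simp only [dif_pos hy1]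
            rw [ex, ey, hx2, hy2]
          · have ex : (finj ⟨x, hx1⟩).2 = σ x := by rw [hσ]; simp only [dif_pos hx1]
            have ey : (finj ⟨y, hy1⟩).2 = σ y := by rw [hσ]; simp only [dif_pos hy1]
            rw [ex, ey, hxy]
        have := hfinj e1
        exact congrArg Subtype.val this
    simpa using hr
  have haw_adj : ∀ w, ∀ x ∈ aw w, G.Adj w x ∧ w ∈ W := by
    intro w x hx
    have hx1 : x ∈ L := (mem_filter.1 hx).1
    have hx2 : ψ x = w := (mem_filter.1 hx).2
    have h := (hψspec x hx1).1
    rw [hx2] at h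
    exact ⟨(mem_nbhd.1 (mem_inter.1 h).1).symm, (mem_inter.1 h).2⟩
  -- basic membership facts
  have hLXZ : L ⊆ XX G κ ∪ ZZ G κ := by rw [hL]; exact LL_subset
  have hWY : W ⊆ YY G κ := fun w hw => (mem_Ypos.1 (hWsub hw)).1
  have hXL : ∀ x ∈ XX G κ, ∀ w ∈ W, G.Adj x w → x ∈ L := by
    intro x hx w hw hadj
    rw [hL]
    apply mem_LL.2
    refine ⟨mem_union.2 (Or.inl hx), ?_⟩
    have h1 : κ x = deg G x := mem_XX.1 hx
    have h2 : 0 < (nbhd G x ∩ W).card :=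
      Finset.card_pos.2 ⟨w, mem_inter.2 ⟨mem_nbhd.2 hadj, hw⟩⟩
    omega
  -- the gadget sets
  set Tight : Finset V := (ZZ G κ).filter
    (fun z => z ∉ L ∧ 0 < κ z ∧ (nbhd G z ∩ W).card = deg G z - κ z) with hTight
  set ZNT : Finset V := (ZZ G κ).filter
    (fun z => z ∉ L ∧ 0 < κ z ∧ (nbhd G z ∩ W).card < deg G z - κ z) with hZNT
  set Park0 : Finset V := (YY G κ).filter
    (fun t => t ∉ W ∧ κ t = 0 ∧ (∀ x ∈ XX G κ, x ∉ L → ¬ G.Adj t x) ∧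
      (∀ z ∈ Tight, ¬ G.Adj t z)) with hPark0
  set Uz : V → Finset V := fun z => (Finset.exists_subset_card_eq
    (min_le_right (κ z) ((nbhd G z ∩ Park0).card))).choose with hUz
  have hUzspec : ∀ z, Uz z ⊆ nbhd G z ∩ Park0 ∧
      (Uz z).card = min (κ z) ((nbhd G z ∩ Park0).card) := by
    intro z
    exact (Finset.exists_subset_card_eq
      (min_le_right (κ z) ((nbhd G z ∩ Park0).card))).choose_spec
  set Park : Finset V := Park0.filter (fun t => ∀ z ∈ ZNT, t ∉ Uz z) with hPark
  have hParkSub : Park ⊆ Park0 := filter_subset _ _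
  set padW : V → Finset V := fun w =>
    if h : κ w - (aw w).card ≤ ((nbhd G w ∩ XX G κ) \ aw w).card then
      (Finset.exists_subset_card_eq h).choose else ∅ with hpadW
  have hpadWspec : ∀ w ∈ W, padW w ⊆ (nbhd G w ∩ XX G κ) \ aw w ∧
      (padW w).card = κ w - (aw w).card := by
    intro w hw
    have h1 : κ w < (nbhd G w ∩ XX G κ).card := hrich w (hWsub hw)
    have h2 := Finset.le_card_sdiff (aw w) (nbhd G w ∩ XX G κ)
    have h : κ w - (aw w).card ≤ ((nbhd G w ∩ XX G κ) \ aw w).card := by omega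
    rw [hpadW]
    simp only [dif_pos h]
    exact (Finset.exists_subset_card_eq h).choose_spec
  set padZ : V → Finset V := fun z =>
    if h : κ z - (Uz z).card ≤ (((nbhd G z \ W) \ Park) \ Uz z).card then
      (Finset.exists_subset_card_eq h).choose else ∅ with hpadZ
  have hpadZspec : ∀ z ∈ ZNT, padZ z ⊆ ((nbhd G z \ W) \ Park) \ Uz z ∧
      (padZ z).card = κ z - (Uz z).card := by
    intro z hz
    obtain ⟨hzZ, hzprop⟩ := mem_filter.1 hz
    obtain ⟨hzL, hzκ, hzlt⟩ := hzprop
    have a0 : (nbhd G z \ W).card + (nbhd G z ∩ W).card = (nbhd G z).card :=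
      Finset.card_sdiff_add_card_inter _ _
    have a0' : deg G z = (nbhd G z).card := rfl
    have hκz := hκ z
    have a1 : κ z < (nbhd G z \ W).card := by omega
    have a2 : nbhd G z ∩ Park0 ⊆ nbhd G z \ W := by
      intro t ht
      refine mem_sdiff.2 ⟨(mem_inter.1 ht).1, ?_⟩
      exact (mem_filter.1 (mem_inter.1 ht).2).2.1
    have a2c := Finset.card_le_card a2
    have a3 : Disjoint (Uz z) Park := by
      rw [Finset.disjoint_left]
      intro t ht htP
      exact (mem_filter.1 htP).2 z hz ht
    have a4 : ((nbhd G z \ W) \ Park0) ∪ Uz z ⊆ (nbhd G z \ W) \ Park := by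
      intro t ht
      rcases mem_union.1 ht with h | h
      · refine mem_sdiff.2 ⟨(mem_sdiff.1 h).1, ?_⟩
        exact fun hc => (mem_sdiff.1 h).2 (hParkSub hc)
      · refine mem_sdiff.2 ⟨a2 ((hUzspec z).1 h), ?_⟩
        exact fun hc => Finset.disjoint_left.1 a3 h hc
    have a5 : Disjoint ((nbhd G z \ W) \ Park0) (Uz z) := by
      rw [Finset.disjoint_right]
      intro t ht
      have := (mem_inter.1 ((hUzspec z).1 ht)).2
      intro hc
      exact (mem_sdiff.1 hc).2 this
    have a6 : ((nbhd G z \ W) \ Park0).card + (Uz z).card ≤ ((nbhd G z \ W) \ Park).card := by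
      rw [← Finset.card_union_of_disjoint a5]
      exact Finset.card_le_card a4
    have a7 : (nbhd G z \ W) \ (nbhd G z ∩ Park0) ⊆ (nbhd G z \ W) \ Park0 := by
      intro t ht
      refine mem_sdiff.2 ⟨(mem_sdiff.1 ht).1, ?_⟩
      intro hc
      exact (mem_sdiff.1 ht).2 (mem_inter.2 ⟨(mem_sdiff.1 (mem_sdiff.1 ht).1).1, hc⟩)
    have a8 := Finset.card_le_card a7
    have a9 := Finset.le_card_sdiff (nbhd G z ∩ Park0) (nbhd G z \ W)
    have a10 := Finset.le_card_sdiff (Uz z) ((nbhd G z \ W) \ Park)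
    have a11 : (Uz z).card = min (κ z) ((nbhd G z ∩ Park0).card) := (hUzspec z).2
    have h : κ z - (Uz z).card ≤ (((nbhd G z \ W) \ Park) \ Uz z).card := by
      rcases Nat.le_total (κ z) ((nbhd G z ∩ Park0).card) with hc | hc
      · rw [min_eq_left hc] at a11
        omega
      · rw [min_eq_right hc] at a11
        omega
    rw [hpadZ]
    simp only [dif_pos h]
    exact (Finset.exists_subset_card_eq h).choose_spec
  -- the alternative partition
  set D₂ : Finset V := ((XX G κ ∪ ZZ G κ) \ L) ∪ W ∪ Park with hD₂
  set P₂ : Finset V := L ∪ ((YY G κ \ W) \ Park) with hP₂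
  set s₂ : V → Finset V := fun v =>
    if v ∈ XX G κ \ L then nbhd G v
    else if v ∈ W then aw v ∪ padW v
    else if v ∈ Tight then nbhd G v \ W
    else if v ∈ ZNT then Uz v ∪ padZ v
    else ∅ with hs₂
  have hD₂mem1 : ∀ v ∈ (XX G κ ∪ ZZ G κ) \ L, v ∈ D₂ :=
    fun v hv => mem_union.2 (Or.inl (mem_union.2 (Or.inl hv)))
  have hD₂mem2 : ∀ v ∈ W, v ∈ D₂ :=
    fun v hv => mem_union.2 (Or.inl (mem_union.2 (Or.inr hv)))
  have hD₂mem3 : ∀ v ∈ Park, v ∈ D₂ := fun v hv => mem_union.2 (Or.inr hv)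
  have hP₂mem1 : L ⊆ P₂ := fun v hv => mem_union.2 (Or.inl hv)
  have hP₂mem2 : ∀ v ∈ YY G κ, v ∉ W → v ∉ Park → v ∈ P₂ :=
    fun v h1 h2 h3 => mem_union.2 (Or.inr (mem_sdiff.2 ⟨mem_sdiff.2 ⟨h1, h2⟩, h3⟩))
  have hPark0Y : Park0 ⊆ YY G κ := filter_subset _ _
  have hPark0P : ∀ t ∈ Park0, t ∉ W ∧ κ t = 0 ∧ (∀ x ∈ XX G κ, x ∉ L → ¬ G.Adj t x) ∧
      (∀ z ∈ Tight, ¬ G.Adj t z) := fun t ht => (mem_filter.1 ht).2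
  have hTightP : ∀ z ∈ Tight, z ∈ ZZ G κ ∧ z ∉ L ∧ 0 < κ z ∧
      (nbhd G z ∩ W).card = deg G z - κ z := by
    intro z hz
    exact ⟨(mem_filter.1 hz).1, (mem_filter.1 hz).2⟩
  have hZNTP : ∀ z ∈ ZNT, z ∈ ZZ G κ ∧ z ∉ L ∧ 0 < κ z ∧
      (nbhd G z ∩ W).card < deg G z - κ z := by
    intro z hz
    exact ⟨(mem_filter.1 hz).1, (mem_filter.1 hz).2⟩
  have hTightD : ∀ z ∈ Tight, z ∈ D₂ := by
    intro z hz
    exact hD₂mem1 z (mem_sdiff.2 ⟨mem_union.2 (Or.inr (hTightP z hz).1), (hTightP z hz).2.1⟩)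
  have hZNTD : ∀ z ∈ ZNT, z ∈ D₂ := by
    intro z hz
    exact hD₂mem1 z (mem_sdiff.2 ⟨mem_union.2 (Or.inr (hZNTP z hz).1), (hZNTP z hz).2.1⟩)
  have hWnotX : ∀ w ∈ W, w ∉ XX G κ \ L := by
    intro w hw hc
    exact (mem_YY.1 (hWY hw)).1 (mem_sdiff.1 hc).1
  have hZnotg12 : ∀ z ∈ ZZ G κ, z ∉ XX G κ \ L ∧ z ∉ W := by
    intro z hz
    constructor
    · intro hc
      exact (mem_ZZ.1 hz).1 (mem_sdiff.1 hc).1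
    · intro hc
      exact (mem_ZZ.1 hz).2 (hWY hc)
  have hTightZNT : ∀ z, z ∈ Tight → z ∉ ZNT := by
    intro z h1 h2
    have e1 := (hTightP z h1).2.2.2
    have e2 := (hZNTP z h2).2.2.2
    omega
  -- Good, field by field
  have good_union : D₂ ∪ P₂ = Finset.univ := by
    apply Finset.eq_univ_of_forall
    intro v
    rcases tri (G := G) (κ := κ) v with h | h | h
    · by_cases hvL : v ∈ L
      · exact mem_union.2 (Or.inr (hP₂mem1 hvL))
      · exact mem_union.2 (Or.inl (hD₂mem1 v (mem_sdiff.2 ⟨mem_union.2 (Or.inl h), hvL⟩)))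
    · by_cases hvW : v ∈ W
      · exact mem_union.2 (Or.inl (hD₂mem2 v hvW))
      · by_cases hvP : v ∈ Park
        · exact mem_union.2 (Or.inl (hD₂mem3 v hvP))
        · exact mem_union.2 (Or.inr (hP₂mem2 v h hvW hvP))
    · by_cases hvL : v ∈ L
      · exact mem_union.2 (Or.inr (hP₂mem1 hvL))
      · exact mem_union.2 (Or.inl (hD₂mem1 v (mem_sdiff.2 ⟨mem_union.2 (Or.inr h), hvL⟩)))
  have good_disj : Disjoint D₂ P₂ := by
    rw [Finset.disjoint_left]
    intro v hv hc
    rcases mem_union.1 hv with hv1 | hv1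
    · rcases mem_union.1 hv1 with hv2 | hv2
      · rcases mem_union.1 hc with hc1 | hc1
        · exact (mem_sdiff.1 hv2).2 hc1
        · exact Finset.disjoint_left.1 XZ_Y_disjoint (mem_sdiff.1 hv2).1
            (mem_sdiff.1 (mem_sdiff.1 hc1).1).1
      · rcases mem_union.1 hc with hc1 | hc1
        · exact Finset.disjoint_left.1 XZ_Y_disjoint (hLXZ hc1) (hWY hv2)
        · exact (mem_sdiff.1 (mem_sdiff.1 hc1).1).2 hv2
    · rcases mem_union.1 hc with hc1 | hc1
      · exact Finset.disjoint_left.1 XZ_Y_disjoint (hLXZ hc1) (hPark0Y (hParkSub hv1))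
      · exact (mem_sdiff.1 hc1).2 hv1
  have good_empty : ∀ v, v ∉ D₂ → s₂ v = ∅ := by
    intro v hv
    have g1 : v ∉ XX G κ \ L := by
      intro hc
      exact hv (hD₂mem1 v (mem_sdiff.2 ⟨mem_union.2 (Or.inl (mem_sdiff.1 hc).1),
        (mem_sdiff.1 hc).2⟩))
    have g2 : v ∉ W := fun hc => hv (hD₂mem2 v hc)
    have g3 : v ∉ Tight := fun hc => hv (hTightD v hc)
    have g4 : v ∉ ZNT := fun hc => hv (hZNTD v hc)
    show (if v ∈ XX G κ \ L then nbhd G v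
      else if v ∈ W then aw v ∪ padW v
      else if v ∈ Tight then nbhd G v \ W
      else if v ∈ ZNT then Uz v ∪ padZ v
      else ∅) = ∅
    rw [if_neg g1, if_neg g2, if_neg g3, if_neg g4]
  have good_tar : ∀ v ∈ D₂, ∀ b ∈ s₂ v, b ∈ P₂ ∧ G.Adj v b := by
    intro v hv b hb
    have hb' : b ∈ (if v ∈ XX G κ \ L then nbhd G v
      else if v ∈ W then aw v ∪ padW v
      else if v ∈ Tight then nbhd G v \ W
      else if v ∈ ZNT then Uz v ∪ padZ v
      else ∅) := hb
    clear hb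
    by_cases g1 : v ∈ XX G κ \ L
    · rw [if_pos g1] at hb'
      have hadj : G.Adj v b := mem_nbhd.1 hb'
      have hvXZ : v ∈ XX G κ ∪ ZZ G κ := mem_union.2 (Or.inl (mem_sdiff.1 g1).1)
      have hbY : b ∈ YY G κ := nbr_in_Y hind hvXZ hadj
      have hbW : b ∉ W := by
        intro hc
        exact (mem_sdiff.1 g1).2 (hXL v (mem_sdiff.1 g1).1 b hc hadj)
      have hbP : b ∉ Park := by
        intro hc
        exact (hPark0P b (hParkSub hc)).2.2.1 v (mem_sdiff.1 g1).1 (mem_sdiff.1 g1).2 hadj.symm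
      exact ⟨hP₂mem2 b hbY hbW hbP, hadj⟩
    · rw [if_neg g1] at hb'
      by_cases g2 : v ∈ W
      · rw [if_pos g2] at hb'
        rcases mem_union.1 hb' with h | h
        · exact ⟨hP₂mem1 (haw_sub v h), (haw_adj v b h).1⟩
        · have hsp := (hpadWspec v g2).1 h
          have hbX : b ∈ XX G κ := (mem_inter.1 (mem_sdiff.1 hsp).1).2
          have hadj : G.Adj v b := mem_nbhd.1 (mem_inter.1 (mem_sdiff.1 hsp).1).1
          exact ⟨hP₂mem1 (hXL b hbX v g2 hadj.symm), hadj⟩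
      · rw [if_neg g2] at hb'
        by_cases g3 : v ∈ Tight
        · rw [if_pos g3] at hb'
          have hadj : G.Adj v b := mem_nbhd.1 (mem_sdiff.1 hb').1
          have hvXZ : v ∈ XX G κ ∪ ZZ G κ := mem_union.2 (Or.inr (hTightP v g3).1)
          have hbY : b ∈ YY G κ := nbr_in_Y hind hvXZ hadj
          have hbP : b ∉ Park := by
            intro hc
            exact (hPark0P b (hParkSub hc)).2.2.2 v g3 hadj.symm
          exact ⟨hP₂mem2 b hbY (mem_sdiff.1 hb').2 hbP, hadj⟩
        · rw [if_neg g3] at hb'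
          by_cases g4 : v ∈ ZNT
          · rw [if_pos g4] at hb'
            rcases mem_union.1 hb' with h | h
            · have hsp := (hUzspec v).1 h
              have hadj : G.Adj v b := mem_nbhd.1 (mem_inter.1 hsp).1
              have hbP0 : b ∈ Park0 := (mem_inter.1 hsp).2
              have hbP : b ∉ Park := by
                intro hc
                exact (mem_filter.1 hc).2 v g4 h
              exact ⟨hP₂mem2 b (hPark0Y hbP0) (hPark0P b hbP0).1 hbP, hadj⟩
            · have hsp := (hpadZspec v g4).1 h
              have h1 := mem_sdiff.1 (mem_sdiff.1 (mem_sdiff.1 hsp).1).1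
              have hadj : G.Adj v b := mem_nbhd.1 h1.1
              have hvXZ : v ∈ XX G κ ∪ ZZ G κ := mem_union.2 (Or.inr (hZNTP v g4).1)
              have hbY : b ∈ YY G κ := nbr_in_Y hind hvXZ hadj
              exact ⟨hP₂mem2 b hbY h1.2 (mem_sdiff.1 (mem_sdiff.1 hsp).1).2, hadj⟩
          · rw [if_neg g4] at hb'
            exact absurd hb' (notMem_empty b)
  have good_card : ∀ v ∈ D₂, (s₂ v).card = κ v := by
    intro v hv
    show (if v ∈ XX G κ \ L then nbhd G v
      else if v ∈ W then aw v ∪ padW v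
      else if v ∈ Tight then nbhd G v \ W
      else if v ∈ ZNT then Uz v ∪ padZ v
      else ∅).card = κ v
    by_cases g1 : v ∈ XX G κ \ L
    · rw [if_pos g1]
      exact (mem_XX.1 (mem_sdiff.1 g1).1).symm
    · rw [if_neg g1]
      by_cases g2 : v ∈ W
      · rw [if_pos g2]
        have hd : Disjoint (aw v) (padW v) := by
          rw [Finset.disjoint_left]
          intro a ha hc
          exact (mem_sdiff.1 ((hpadWspec v g2).1 hc)).2 ha
        rw [Finset.card_union_of_disjoint hd, (hpadWspec v g2).2]
        have := haw_card v
        omega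
      · rw [if_neg g2]
        by_cases g3 : v ∈ Tight
        · rw [if_pos g3]
          have h1 : (nbhd G v \ W).card + (nbhd G v ∩ W).card = (nbhd G v).card :=
            Finset.card_sdiff_add_card_inter _ _
          have h2 := (hTightP v g3).2.2.2
          have h3 := hκ v
          have h4 : deg G v = (nbhd G v).card := rfl
          omega
        · rw [if_neg g3]
          by_cases g4 : v ∈ ZNT
          · rw [if_pos g4]
            have hd : Disjoint (Uz v) (padZ v) := by
              rw [Finset.disjoint_left]
              intro a ha hc
              exact (mem_sdiff.1 ((hpadZspec v g4).1 hc)).2 ha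
            rw [Finset.card_union_of_disjoint hd, (hpadZspec v g4).2]
            have h1 := (hUzspec v).2
            have h2 : min (κ v) ((nbhd G v ∩ Park0).card) ≤ κ v := min_le_left _ _
            omega
          · rw [if_neg g4]
            rcases mem_union.1 hv with hv1 | hv1
            · rcases mem_union.1 hv1 with hv2 | hv2
              · rcases mem_union.1 (mem_sdiff.1 hv2).1 with hv3 | hv3
                · exact absurd (mem_sdiff.2 ⟨hv3, (mem_sdiff.1 hv2).2⟩) g1
                · -- v ∈ ZZ \ L, not Tight, not ZNT: κ v = 0
                  have hvL : v ∉ L := (mem_sdiff.1 hv2).2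
                  have hle : (nbhd G v ∩ W).card ≤ deg G v - κ v := by
                    by_contra hcon
                    push_neg at hcon
                    exact hvL (by rw [hL]; exact mem_LL.2 ⟨mem_union.2 (Or.inr hv3), hcon⟩)
                  have hκv : κ v = 0 := by
                    by_contra hcon
                    have hpos : 0 < κ v := Nat.pos_of_ne_zero hcon
                    rcases lt_or_eq_of_le hle with hlt | heq
                    · exact g4 (mem_filter.2 ⟨hv3, hvL, hpos, hlt⟩)
                    · exact g3 (mem_filter.2 ⟨hv3, hvL, hpos, heq⟩)
                  simp [hκv]
              · exact absurd hv2 g2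
            · simp [(hPark0P v (hParkSub hv1)).2.1]
  have good_cov : ∀ p ∈ P₂, ∃ d ∈ D₂, p ∈ s₂ d := by
    intro p hp
    rcases mem_union.1 hp with hpL | hpR
    · -- p ∈ L : covered by ψ p ∈ W
      have hsp := hψspec p hpL
      have hwW : ψ p ∈ W := (mem_inter.1 hsp.1).2
      refine ⟨ψ p, hD₂mem2 _ hwW, ?_⟩
      show p ∈ (if ψ p ∈ XX G κ \ L then nbhd G (ψ p)
        else if ψ p ∈ W then aw (ψ p) ∪ padW (ψ p)
        else if ψ p ∈ Tight then nbhd G (ψ p) \ W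
        else if ψ p ∈ ZNT then Uz (ψ p) ∪ padZ (ψ p)
        else ∅)
      rw [if_neg (hWnotX _ hwW), if_pos hwW]
      exact mem_union.2 (Or.inl (haw_mem p hpL))
    · have hpY : p ∈ YY G κ := (mem_sdiff.1 (mem_sdiff.1 hpR).1).1
      have hpW : p ∉ W := (mem_sdiff.1 (mem_sdiff.1 hpR).1).2
      have hpPark : p ∉ Park := (mem_sdiff.1 hpR).2
      by_cases ha : ∃ x ∈ XX G κ, x ∉ L ∧ G.Adj p x
      · obtain ⟨x, hx1, hx2, hx3⟩ := ha
        have hxm : x ∈ XX G κ \ L := mem_sdiff.2 ⟨hx1, hx2⟩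
        refine ⟨x, hD₂mem1 x (mem_sdiff.2 ⟨mem_union.2 (Or.inl hx1), hx2⟩), ?_⟩
        show p ∈ (if x ∈ XX G κ \ L then nbhd G x
          else if x ∈ W then aw x ∪ padW x
          else if x ∈ Tight then nbhd G x \ W
          else if x ∈ ZNT then Uz x ∪ padZ x
          else ∅)
        rw [if_pos hxm]
        exact mem_nbhd.2 hx3.symm
      · by_cases hbz : ∃ z ∈ Tight, G.Adj p z
        · obtain ⟨z, hz1, hz2⟩ := hbz
          have hzZ := (hTightP z hz1).1
          refine ⟨z, hTightD z hz1, ?_⟩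
          show p ∈ (if z ∈ XX G κ \ L then nbhd G z
            else if z ∈ W then aw z ∪ padW z
            else if z ∈ Tight then nbhd G z \ W
            else if z ∈ ZNT then Uz z ∪ padZ z
            else ∅)
          rw [if_neg (hZnotg12 z hzZ).1, if_neg (hZnotg12 z hzZ).2, if_pos hz1]
          exact mem_sdiff.2 ⟨mem_nbhd.2 hz2.symm, hpW⟩
        · by_cases hκp : κ p = 0
          · -- p must be an unparked Park0 vertex
            have hpP0 : p ∈ Park0 := by
              refine mem_filter.2 ⟨hpY, hpW, hκp, ?_, ?_⟩
              · intro x hx1 hx2 hadj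
                exact ha ⟨x, hx1, hx2, hadj⟩
              · intro z hz hadj
                exact hbz ⟨z, hz, hadj⟩
            have hnp : ¬ ∀ z ∈ ZNT, p ∉ Uz z := by
              intro hc
              exact hpPark (mem_filter.2 ⟨hpP0, hc⟩)
            push_neg at hnp
            obtain ⟨z, hz1, hz2⟩ := hnp
            have hzZ := (hZNTP z hz1).1
            refine ⟨z, hZNTD z hz1, ?_⟩
            show p ∈ (if z ∈ XX G κ \ L then nbhd G z
              else if z ∈ W then aw z ∪ padW z
              else if z ∈ Tight then nbhd G z \ W
              else if z ∈ ZNT then Uz z ∪ padZ z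
              else ∅)
            rw [if_neg (hZnotg12 z hzZ).1, if_neg (hZnotg12 z hzZ).2,
              if_neg (fun hc => hTightZNT z hc hz1), if_pos hz1]
            exact mem_union.2 (Or.inl hz2)
          · -- κ p > 0 : impossible (would give an X∖L- or Tight-neighbour)
            exfalso
            have hpYpos : p ∈ Ypos G κ := mem_Ypos.2 ⟨hpY, Nat.pos_of_ne_zero hκp⟩
            obtain ⟨x, hx1, hx2, hx3, hx4⟩ := hP2 p hpYpos hpW
            rcases mem_union.1 hx1 with hxX | hxZ
            · exact ha ⟨x, hxX, hx2, hx3⟩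
            · have hpnb : p ∈ nbhd G x := mem_nbhd.2 hx3.symm
              have hss : nbhd G x ∩ W ⊂ nbhd G x := by
                refine Finset.ssubset_iff_of_subset inter_subset_left |>.2 ?_
                exact ⟨p, hpnb, fun hc => hpW (mem_inter.1 hc).2⟩
              have hlt := Finset.card_lt_card hss
              have h4 : deg G x = (nbhd G x).card := rfl
              have hκx : 0 < κ x := by
                have := hκ x
                omega
              exact hbz ⟨x, mem_filter.2 ⟨hxZ, hx2, hκx, hx4⟩, hx3⟩
  -- conclusion
  obtain ⟨s₁, hg₁⟩ := canon hκ hind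
  have hg₂ : Good G κ D₂ P₂ s₂ :=
    ⟨good_union, good_disj, good_empty, good_tar, good_card, good_cov⟩
  obtain ⟨w₀, hw₀⟩ := hWne
  refine ⟨XX G κ ∪ ZZ G κ, YY G κ, starG s₁, D₂, P₂, starG s₂,
    good_isDPNash hκ hg₁, good_isDPNash hκ hg₂, ?_⟩
  intro he
  have h1 : w₀ ∈ D₂ := hD₂mem2 w₀ hw₀
  rw [← he] at h1
  exact Finset.disjoint_left.1 XZ_Y_disjoint h1 (hWY hw₀)


/-- All DP-Nash subgraphs of `(G,κ)` have the same `D`-set if and only if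
`X ∪ Z` is independent in `G` and property `O*` holds. -/
theorem stmt10 (G : SimpleGraph V) (κ : V → ℕ) (hκ : ∀ v, κ v ≤ deg G v)
    (hedge : ∀ u v, G.Adj u v → 0 < κ u ∨ 0 < κ v) :
    (∀ (D₁ P₁ : Finset V) (H₁ : SimpleGraph V) (D₂ P₂ : Finset V) (H₂ : SimpleGraph V),
        IsDPNash G κ D₁ P₁ H₁ → IsDPNash G κ D₂ P₂ H₂ → D₁ = D₂) ↔
      ((∀ u ∈ XX G κ ∪ ZZ G κ, ∀ v ∈ XX G κ ∪ ZZ G κ, ¬ G.Adj u v) ∧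
        ∀ W : Finset V, W.Nonempty → W ⊆ Ypos G κ → ∑ w ∈ W, κ w < (LL G κ W).card) := by
  constructor
  · intro huniq
    by_contra hc
    have hs : ∃ (D₁ P₁ : Finset V) (H₁ : SimpleGraph V) (D₂ P₂ : Finset V) (H₂ : SimpleGraph V),
        IsDPNash G κ D₁ P₁ H₁ ∧ IsDPNash G κ D₂ P₂ H₂ ∧ D₁ ≠ D₂ := by
      by_cases hind : ∀ u ∈ XX G κ ∪ ZZ G κ, ∀ v ∈ XX G κ ∪ ZZ G κ, ¬ G.Adj u v
      · have hO : ¬ ∀ W : Finset V, W.Nonempty → W ⊆ Ypos G κ →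
            ∑ w ∈ W, κ w < (LL G κ W).card := fun h => hc ⟨hind, h⟩
        push_neg at hO
        obtain ⟨W₀, hW₀ne, hW₀sub, hW₀⟩ := hO
        by_cases hB1 : ∃ w ∈ Ypos G κ, (nbhd G w ∩ XX G κ).card ≤ κ w
        · obtain ⟨w, hw, hcnt⟩ := hB1
          exact pairB1 hκ hedge hw hcnt
        · push_neg at hB1
          exact pairB2 hκ hedge hind hB1 hW₀ne hW₀sub hW₀
      · push_neg at hind
        obtain ⟨u, hu, v, hv, huv⟩ := hind
        rcases mem_union.1 hu with hu' | hu'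
        · rcases mem_union.1 hv with hv' | hv'
          · exact pairA1 hκ hedge (mem_XX.1 hu') (mem_XX.1 hv') huv
          · exact absurd (not_X_Z_adj hu' hv' huv) not_false
        · rcases mem_union.1 hv with hv' | hv'
          · exact absurd (not_X_Z_adj hv' hu' huv.symm) not_false
          · exact pairA2 hκ hedge hu' hv' huv
    obtain ⟨D₁, P₁, H₁, D₂, P₂, H₂, h₁, h₂, hne⟩ := hs
    exact hne (huniq D₁ P₁ H₁ D₂ P₂ H₂ h₁ h₂)
  · rintro ⟨hind, hO⟩ D₁ P₁ H₁ D₂ P₂ H₂ h₁ h₂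
    rw [backward hκ hind hO h₁, backward hκ hind hO h₂]
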